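/- arXiv:1307.6625 — 7 statements merged into one kernel-verified Lean document; each statement's English description precedes it below -/
import Mathlib

section
/- Let X be a metric space and n ∈ ℕ. Then asdim X ≤ n if and only if for every s < ∞ and t < ∞ there exists a uniformly bounded cover 𝒰 of X such that the s-multiplicity of 𝒰 is at most n+1 and the Lebesgue number of 𝒰 is at least t. -/
open Metric Set
open scoped Classical

/-- `𝒰` is an `r`-disjoint family of subsets: any two points lying in different
members are at distance `> r`. -/
def RDisjoint {X : Type*} [PseudoMetricSpace X] (r : ℝ) (𝒰 : Set (Set X)) : Prop :=
  ∀ U ∈ 𝒰, ∀ V ∈ 𝒰, U ≠ V → ∀ x ∈ U, ∀ y ∈ V, r < dist x y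

/-- The asymptotic dimension of `X` is at most `n`. -/
def AsdimLE (X : Type*) [PseudoMetricSpace X] (n : ℕ) : Prop :=
  ∀ r : ℝ, ∃ (D : ℝ) (𝒰 : Fin (n + 1) → Set (Set X)),
    (∀ i, RDisjoint r (𝒰 i)) ∧
    (∀ i, ∀ U ∈ 𝒰 i, EMetric.diam U ≤ ENNReal.ofReal D) ∧
    (⋃ i, ⋃₀ 𝒰 i) = Set.univ

/-- The asymptotic Assouad-Nagata dimension of `X` is at most `n`. -/
def ANasdimLE (X : Type*) [PseudoMetricSpace X] (n : ℕ) : Prop :=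
  ∃ c b : ℝ, 0 ≤ c ∧ 0 ≤ b ∧ ∀ r : ℝ, ∃ 𝒰 : Fin (n + 1) → Set (Set X),
    (∀ i, RDisjoint r (𝒰 i)) ∧
    (∀ i, ∀ U ∈ 𝒰 i, EMetric.diam U ≤ ENNReal.ofReal (c * r + b)) ∧
    (⋃ i, ⋃₀ 𝒰 i) = Set.univ

/-- The Assouad-Nagata dimension of `X` is at most `n`. -/
def ANdimLE (X : Type*) [PseudoMetricSpace X] (n : ℕ) : Prop :=
  ∃ c : ℝ, 0 ≤ c ∧ ∀ r : ℝ, ∃ 𝒰 : Fin (n + 1) → Set (Set X),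
    (∀ i, RDisjoint r (𝒰 i)) ∧
    (∀ i, ∀ U ∈ 𝒰 i, EMetric.diam U ≤ ENNReal.ofReal (c * r)) ∧
    (⋃ i, ⋃₀ 𝒰 i) = Set.univ

/-- `𝒰` covers `X`. -/
def IsCover {X : Type*} (𝒰 : Set (Set X)) : Prop := ⋃₀ 𝒰 = Set.univ

/-- `mesh 𝒰 ≤ M`: every member of `𝒰` has diameter at most `M`. -/
def MeshLE {X : Type*} [PseudoMetricSpace X] (𝒰 : Set (Set X)) (M : ℝ) : Prop :=
  ∀ U ∈ 𝒰, EMetric.diam U ≤ ENNReal.ofReal M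

/-- `𝒰` is uniformly bounded. -/
def UniformlyBounded {X : Type*} [PseudoMetricSpace X] (𝒰 : Set (Set X)) : Prop :=
  ∃ M : ℝ, MeshLE 𝒰 M

/-- The `s`-multiplicity of `𝒰` is at most `m`: no subset of diameter at most `s`
meets more than `m` members of `𝒰`. -/
def MultLE {X : Type*} [PseudoMetricSpace X] (𝒰 : Set (Set X)) (s : ℝ) (m : ℕ) : Prop :=
  ∀ B : Set X, EMetric.diam B ≤ ENNReal.ofReal s →
    {U | U ∈ 𝒰 ∧ (U ∩ B).Nonempty}.encard ≤ (m : ℕ∞)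

/-- The `r`-multiplicity of `𝒰`, as an extended natural number. -/
noncomputable def rMult {X : Type*} [PseudoMetricSpace X] (𝒰 : Set (Set X)) (r : ℝ) : ℕ∞ :=
  ⨆ B ∈ {B : Set X | EMetric.diam B ≤ ENNReal.ofReal r},
    {U | U ∈ 𝒰 ∧ (U ∩ B).Nonempty}.encard

/-- The (pointwise) multiplicity of `𝒰`, as an extended natural number. -/
noncomputable def Mult {X : Type*} (𝒰 : Set (Set X)) : ℕ∞ :=
  ⨆ x : X, {U | U ∈ 𝒰 ∧ x ∈ U}.encard

/-- The Lebesgue number of `𝒰` is at least `t`: every subset of diameter at most `t`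
is contained in some member of `𝒰`. -/
def LebesgueGE {X : Type*} [PseudoMetricSpace X] (𝒰 : Set (Set X)) (t : ℝ) : Prop :=
  ∀ B : Set X, EMetric.diam B ≤ ENNReal.ofReal t → ∃ U ∈ 𝒰, B ⊆ U

/-- `f` is bornologous. -/
def Bornologous {X Y : Type*} [PseudoMetricSpace X] [PseudoMetricSpace Y] (f : X → Y) : Prop :=
  ∃ δ : ℝ → ℝ, ∀ x x' : X, dist (f x) (f x') ≤ δ (dist x x')

/-- `f` is (metrically) proper: preimages of bounded sets are bounded. -/
def MetricProper {X Y : Type*} [PseudoMetricSpace X] [PseudoMetricSpace Y] (f : X → Y) : Prop :=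
  ∀ B : Set Y, Bornology.IsBounded B → Bornology.IsBounded (f ⁻¹' B)

/-- `f` is a coarse map. -/
def CoarseMap {X Y : Type*} [PseudoMetricSpace X] [PseudoMetricSpace Y] (f : X → Y) : Prop :=
  Bornologous f ∧ MetricProper f

/-- `f` is a Lipschitz map. -/
def LipschitzMap {X Y : Type*} [PseudoMetricSpace X] [PseudoMetricSpace Y] (f : X → Y) : Prop :=
  ∃ c : ℝ, 0 < c ∧ ∀ x x' : X, dist (f x) (f x') ≤ c * dist x x'

/-- `f` is asymptotically Lipschitz. -/
def AsympLipschitz {X Y : Type*} [PseudoMetricSpace X] [PseudoMetricSpace Y] (f : X → Y) : Prop :=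
  ∃ c b : ℝ, 0 < c ∧ 0 < b ∧ ∀ x x' : X, dist (f x) (f x') ≤ c * dist x x' + b

/-- Property (B)ₙ of a map `f : X → Y`. -/
def PropertyB {X Y : Type*} [PseudoMetricSpace X] [PseudoMetricSpace Y]
    (f : X → Y) (n : ℕ) : Prop :=
  ∀ r : ℝ, ∃ d : ℝ, ∀ B : Set Y, EMetric.diam B ≤ ENNReal.ofReal r →
    ∃ A : Fin n → Set X, f ⁻¹' B = ⋃ i, A i ∧ ∀ i, EMetric.diam (A i) ≤ ENNReal.ofReal d

/-- Property (C)ₙ of a map `f : X → Y`. -/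
def PropertyC {X Y : Type*} [PseudoMetricSpace X] [PseudoMetricSpace Y]
    (f : X → Y) (n : ℕ) : Prop :=
  ∃ c d : ℝ, 0 < c ∧ 0 < d ∧ ∀ r : ℝ, ∀ B : Set Y, EMetric.diam B ≤ ENNReal.ofReal r →
    ∃ A : Fin n → Set X, f ⁻¹' B = ⋃ i, A i ∧
      ∀ i, EMetric.diam (A i) ≤ ENNReal.ofReal (c * r + d)

/-- Property (B) (of Miyata-Yoshimura). -/
def PropertyB0 {X Y : Type*} [PseudoMetricSpace X] [PseudoMetricSpace Y] (f : X → Y) : Prop :=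
  ∃ d : ℝ, 0 < d ∧ ∀ r : ℝ, 0 < r → ∀ B : Set Y, EMetric.diam B ≤ ENNReal.ofReal r →
    ∃ A : Set X, EMetric.diam A ≤ ENNReal.ofReal (d * r) ∧ f '' A = B

/-- Two maps are close. -/
def CloseMaps {X Y : Type*} [PseudoMetricSpace Y] (f g : X → Y) : Prop :=
  ∃ S : ℝ, ∀ x : X, dist (f x) (g x) ≤ S

/-- `f` is a coarse equivalence. -/
def CoarseEquivalence {X Y : Type*} [PseudoMetricSpace X] [PseudoMetricSpace Y]
    (f : X → Y) : Prop :=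
  CoarseMap f ∧ ∃ g : Y → X, CoarseMap g ∧ CloseMaps (f ∘ g) id ∧ CloseMaps (g ∘ f) id

/-- `f` is a quasi-isometric map. -/
def QuasiIsometric {X Y : Type*} [PseudoMetricSpace X] [PseudoMetricSpace Y]
    (f : X → Y) : Prop :=
  (∃ c b : ℝ, 0 < c ∧ 0 < b ∧ ∀ x x' : X,
      (1 / c) * dist x x' - b ≤ dist (f x) (f x') ∧ dist (f x) (f x') ≤ c * dist x x' + b) ∧
  ∃ R : ℝ, 0 < R ∧ ∀ y : Y, ∃ x : X, dist y (f x) ≤ R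

/-- `d` satisfies the ultrametric (strong triangle) inequality. -/
def IsUltrametric {X : Type*} (d : X → X → ℝ) : Prop :=
  ∀ x y z : X, d x z ≤ max (d x y) (d y z)

/-- The distance function of a metric-space structure. -/
def distOf {Z : Type*} (m : MetricSpace Z) : Z → Z → ℝ :=
  m.toPseudoMetricSpace.toDist.dist

/-- The sum metric on the product of two metric spaces. -/
noncomputable def sumMetric (X Y : Type*) [MetricSpace X] [MetricSpace Y] :
    MetricSpace (X × Y) where
  dist p q := dist p.1 q.1 + dist p.2 q.2
  dist_self p := by simp
  dist_comm p q := by simp [dist_comm]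
  dist_triangle p q r := by
    have h1 := dist_triangle p.1 q.1 r.1
    have h2 := dist_triangle p.2 q.2 r.2
    try dsimp only
    linarith
  eq_of_dist_eq_zero := by
    intro p q h
    try dsimp only at h
    have h1 : dist p.1 q.1 = 0 :=
      le_antisymm (by linarith [dist_nonneg (x := p.2) (y := q.2)]) dist_nonneg
    have h2 : dist p.2 q.2 = 0 :=
      le_antisymm (by linarith [dist_nonneg (x := p.1) (y := q.1)]) dist_nonneg
    exact Prod.ext (dist_eq_zero.mp h1) (dist_eq_zero.mp h2)

/-- `p(V, W)`: the least `k` such that `V ∪ W` is contained in a member of `𝒰ₖ`. -/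
noncomputable def pVal {X : Type*} (𝒰 : ℕ → Set (Set X)) (V W : ↥(𝒰 0)) : ℕ :=
  sInf {k : ℕ | ∃ U ∈ 𝒰 k, (V : Set X) ∪ (W : Set X) ⊆ U}

/-- The ultrametric `d_B` (base `3`) on `𝒰₀` determined by a precode structure. -/
noncomputable def dB {X : Type*} (𝒰 : ℕ → Set (Set X)) (V W : ↥(𝒰 0)) : ℝ :=
  if V = W then 0 else 3 ^ pVal 𝒰 V W

/-- The ultrametric `d_C` (base `a`) on `𝒰₀` determined by a precode structure. -/
noncomputable def dC {X : Type*} (𝒰 : ℕ → Set (Set X)) (a : ℝ) (V W : ↥(𝒰 0)) : ℝ :=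
  if V = W then 0 else a ^ pVal 𝒰 V W


lemma dist_le_of_diam_le' {X : Type*} [PseudoMetricSpace X] {B : Set X} {s : ℝ}
    (h : EMetric.diam B ≤ ENNReal.ofReal s) {x y : X} (hx : x ∈ B) (hy : y ∈ B) :
    dist x y ≤ max s 0 := by
  have h1 : edist x y ≤ ENNReal.ofReal (max s 0) :=
    le_trans (EMetric.edist_le_diam_of_mem hx hy)
      (le_trans h (ENNReal.ofReal_le_ofReal (le_max_left _ _)))
  rw [edist_dist] at h1
  exact (ENNReal.ofReal_le_ofReal_iff (le_max_right _ _)).mp h1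

lemma diam_le_of_dist_le' {X : Type*} [PseudoMetricSpace X] {B : Set X} {M : ℝ}
    (h : ∀ x ∈ B, ∀ y ∈ B, dist x y ≤ M) :
    EMetric.diam B ≤ ENNReal.ofReal M := by
  apply EMetric.diam_le
  intro x hx y hy
  rw [edist_dist]
  exact ENNReal.ofReal_le_ofReal (h x hx y hy)

/-- `asdim X ≤ n` iff for every `s, t < ∞` there is a uniformly bounded
cover `𝒰` of `X` with `s`-multiplicity at most `n + 1` and Lebesgue number at least `t`. -/
theorem statement0 {X : Type*} [MetricSpace X] (n : ℕ) :
    AsdimLE X n ↔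
      ∀ s t : ℝ, ∃ 𝒰 : Set (Set X), IsCover 𝒰 ∧ UniformlyBounded 𝒰 ∧
        MultLE 𝒰 s (n + 1) ∧ LebesgueGE 𝒰 t := by
  constructor
  · -- asdim ⇒ covers
    intro h s t
    set s' := max s 0 with hs'
    set t' := max t 0 with ht'
    have hs'0 : 0 ≤ s' := le_max_right s 0
    have ht'0 : 0 ≤ t' := le_max_right t 0
    obtain ⟨D, 𝒰, hdisj, hdiam, hcov⟩ := h (s' + 2 * t' + 1)
    set N : Set X → Set X := fun U => {y | ∃ u ∈ U, dist y u ≤ t'} with hN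
    set 𝒱 : Set (Set X) := insert ∅ {V | ∃ i, ∃ U ∈ 𝒰 i, V = N U} with h𝒱
    have hmemx : ∀ x : X, ∃ i, ∃ U ∈ 𝒰 i, x ∈ U := by
      intro x
      have : x ∈ ⋃ i, ⋃₀ 𝒰 i := by rw [hcov]; trivial
      simp only [Set.mem_iUnion, Set.mem_sUnion] at this
      obtain ⟨i, U, hU, hx⟩ := this
      exact ⟨i, U, hU, hx⟩
    refine ⟨𝒱, ?_, ?_, ?_, ?_⟩
    · -- cover
      apply Set.eq_univ_of_forall
      intro x
      obtain ⟨i, U, hU, hx⟩ := hmemx x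
      exact ⟨N U, Set.mem_insert_iff.mpr (Or.inr ⟨i, U, hU, rfl⟩), ⟨x, hx, by simpa using ht'0⟩⟩
    · -- uniformly bounded
      refine ⟨max D 0 + 2 * t', ?_⟩
      intro V hV
      rcases Set.mem_insert_iff.mp hV with h0 | ⟨i, U, hU, rfl⟩
      · subst h0; show Metric.ediam (∅ : Set X) ≤ _; simp
      · apply diam_le_of_dist_le'
        rintro y ⟨u, hu, hyu⟩ y' ⟨u', hu', hy'u'⟩
        have hd : dist u u' ≤ max D 0 := dist_le_of_diam_le' (hdiam i U hU) hu hu'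
        have := dist_triangle4 y u u' y'
        have h1 : dist u' y' ≤ t' := by rw [dist_comm]; exact hy'u'
        linarith
    · -- multiplicity
      intro B hB
      by_cases hBne : B.Nonempty
      · set f : Fin (n + 1) → Set X := fun i =>
          if h : ∃ U ∈ 𝒰 i, (N U ∩ B).Nonempty then N h.choose else ∅ with hf
        have hsub : {V | V ∈ 𝒱 ∧ (V ∩ B).Nonempty} ⊆ Set.range f := by
          rintro V ⟨hV, hVB⟩
          rcases Set.mem_insert_iff.mp hV with h0 | ⟨i, U, hU, rfl⟩
          · exfalso; subst h0; simp at hVB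
          · have hex : ∃ U' ∈ 𝒰 i, (N U' ∩ B).Nonempty := ⟨U, hU, hVB⟩
            have hfi : f i = N hex.choose := dif_pos hex
            obtain ⟨hU₀, hU₀B⟩ := hex.choose_spec
            set U₀ := hex.choose
            have hUU₀ : U = U₀ := by
              by_contra hne
              obtain ⟨y, ⟨u, hu, hyu⟩, hyB⟩ := hVB
              obtain ⟨y₀, ⟨u₀, hu₀, hy₀u₀⟩, hy₀B⟩ := hU₀B
              have hlt := hdisj i U hU U₀ hU₀ hne u hu u₀ hu₀
              have hyy₀ : dist y y₀ ≤ s' := dist_le_of_diam_le' hB hyB hy₀B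
              have h1 : dist u y ≤ t' := by rw [dist_comm]; exact hyu
              have := dist_triangle4 u y y₀ u₀
              linarith
            refine ⟨i, ?_⟩
            rw [hfi, ← hUU₀]
        calc {V | V ∈ 𝒱 ∧ (V ∩ B).Nonempty}.encard ≤ (Set.range f).encard :=
              Set.encard_mono hsub
          _ = (f '' Set.univ).encard := by rw [Set.image_univ]
          _ ≤ (Set.univ : Set (Fin (n + 1))).encard := Set.encard_image_le _ _
          _ ≤ ((n + 1 : ℕ) : ℕ∞) := by
              rw [Set.encard_univ]
              simp
      · rw [Set.not_nonempty_iff_eq_empty] at hBne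
        subst hBne
        have : {U | U ∈ 𝒱 ∧ (U ∩ (∅ : Set X)).Nonempty} = ∅ := by
          ext U; simp
        rw [this, Set.encard_empty]
        exact zero_le
    · -- Lebesgue
      intro B hB
      by_cases hBne : B.Nonempty
      · obtain ⟨x, hx⟩ := hBne
        obtain ⟨i, U, hU, hxU⟩ := hmemx x
        refine ⟨N U, Set.mem_insert_iff.mpr (Or.inr ⟨i, U, hU, rfl⟩), ?_⟩
        intro y hy
        exact ⟨x, hxU, dist_le_of_diam_le' hB hy hx⟩
      · rw [Set.not_nonempty_iff_eq_empty] at hBne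
        subst hBne
        exact ⟨∅, Set.mem_insert _ _, Set.empty_subset _⟩
  · -- covers ⇒ asdim
    intro h r
    set ρ := max r 0 with hρdef
    have hρ : 0 ≤ ρ := le_max_right r 0
    obtain ⟨𝒰, hcov, ⟨M, hM⟩, hmult, hleb⟩ := h 0 ((4 * n + 6) * ρ)
    set Dp : X → ℕ → Set (Set X) :=
      fun x j => {U | U ∈ 𝒰 ∧ Metric.closedBall x ((j : ℝ) * ρ) ⊆ U} with hDp
    have hmono : ∀ (x : X) {j j' : ℕ}, j ≤ j' → Dp x j' ⊆ Dp x j := by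
      rintro x j j' hjj' U ⟨hU, hsub⟩
      refine ⟨hU, Set.Subset.trans (Metric.closedBall_subset_closedBall ?_) hsub⟩
      exact mul_le_mul_of_nonneg_right (Nat.cast_le.mpr hjj') hρ
    have hsub0 : ∀ (x : X) (j : ℕ), Dp x j ⊆ {U | U ∈ 𝒰 ∧ x ∈ U} := by
      rintro x j U ⟨hU, hs⟩
      exact ⟨hU, hs (Metric.mem_closedBall_self (by positivity))⟩
    have hbig : ∀ x : X, {U | U ∈ 𝒰 ∧ x ∈ U}.encard ≤ ((n + 1 : ℕ) : ℕ∞) := by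
      intro x
      have h0 := hmult {x} (by show Metric.ediam ({x} : Set X) ≤ _; simp)
      have : {U | U ∈ 𝒰 ∧ (U ∩ {x}).Nonempty} = {U | U ∈ 𝒰 ∧ x ∈ U} := by
        ext U; simp [Set.inter_nonempty]
      rwa [this] at h0
    have hbigfin : ∀ x : X, {U | U ∈ 𝒰 ∧ x ∈ U}.Finite :=
      fun x => Set.finite_of_encard_le_coe (hbig x)
    have hfin : ∀ (x : X) (j : ℕ), (Dp x j).Finite :=
      fun x j => (hbigfin x).subset (hsub0 x j)
    have hcard : ∀ (x : X) (j : ℕ), (Dp x j).ncard ≤ n + 1 := by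
      intro x j
      have h1 := Set.ncard_le_ncard (hsub0 x j) (hbigfin x)
      have h2 := (Set.encard_le_coe_iff_finite_ncard_le.mp (hbig x)).2
      omega
    have hne : ∀ x : X, (Dp x (2 * n + 3)).Nonempty := by
      intro x
      have hdiam2 : EMetric.diam (Metric.closedBall x (((2 * n + 3 : ℕ) : ℝ) * ρ))
          ≤ ENNReal.ofReal ((4 * n + 6) * ρ) := by
        apply diam_le_of_dist_le'
        intro y hy y' hy'
        rw [Metric.mem_closedBall] at hy hy'
        have h0 := dist_triangle y x y'
        have h1 : dist x y' = dist y' x := dist_comm x y'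
        push_cast at hy hy' ⊢
        nlinarith [hρ]
      obtain ⟨U, hU, hs⟩ := hleb (Metric.closedBall x (((2 * n + 3 : ℕ) : ℝ) * ρ)) hdiam2
      exact ⟨U, hU, hs⟩
    have hstab : ∀ x : X, ∃ k : ℕ, 1 ≤ k ∧ k ≤ n + 1 ∧ Dp x (2 * k - 1) = Dp x (2 * k + 1) := by
      intro x
      by_contra hcon
      push_neg at hcon
      have claim : ∀ m : ℕ, m ≤ n + 1 → (Dp x (2 * m + 1)).ncard + m ≤ (Dp x 1).ncard := by
        intro m
        induction m with
        | zero => intro _; simp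
        | succ m ih =>
          intro hm
          have hss : Dp x (2 * (m + 1) + 1) ⊂ Dp x (2 * m + 1) := by
            refine HasSubset.Subset.ssubset_of_ne (hmono x (by omega)) ?_
            intro heq
            have := hcon (m + 1) (by omega) hm
            have h21 : 2 * (m + 1) - 1 = 2 * m + 1 := by omega
            rw [h21] at this
            exact this heq.symm
          have hlt := Set.ncard_lt_ncard hss (hfin x (2 * m + 1))
          have := ih (by omega)
          omega
      have h1 := claim (n + 1) le_rfl
      have h2 : 1 ≤ (Dp x (2 * (n + 1) + 1)).ncard := by
        rw [Nat.one_le_iff_ne_zero]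
        intro h0
        have := ((Set.ncard_pos (hfin x (2 * (n + 1) + 1))).mpr (by
          have h23 : 2 * (n + 1) + 1 = 2 * n + 3 := by omega
          rw [h23]; exact hne x))
        omega
      have h3 := hcard x 1
      omega
    choose k hk1 hk2 hkeq using hstab
    set σ : X → Set (Set X) := fun x => Dp x (2 * k x - 1) with hσ
    have interleave : ∀ x y : X, dist x y ≤ ρ → ∀ j : ℕ, Dp x (j + 1) ⊆ Dp y j := by
      rintro x y hdxy j U ⟨hU, hs⟩
      refine ⟨hU, fun z hz => hs ?_⟩
      rw [Metric.mem_closedBall] at hz ⊢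
      have h1 : dist z x ≤ dist z y + dist y x := dist_triangle z y x
      have h2 : dist y x ≤ ρ := by rw [dist_comm]; exact hdxy
      push_cast
      linarith
    have claimA : ∀ x y : X, dist x y ≤ ρ → Dp y (2 * k x) = σ x := by
      intro x y hdxy
      apply Set.Subset.antisymm
      · have h1 : Dp y ((2 * k x - 1) + 1) ⊆ Dp x (2 * k x - 1) :=
          interleave y x (by rw [dist_comm]; exact hdxy) (2 * k x - 1)
        have h2 : 2 * k x - 1 + 1 = 2 * k x := by have := hk1 x; omega
        rw [h2] at h1
        exact h1
      · have h1 : σ x = Dp x (2 * k x + 1) := hkeq x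
        rw [h1]
        have h2 : Dp x (2 * k x + 1) ⊆ Dp y (2 * k x) := interleave x y hdxy (2 * k x)
        exact h2
    have aux : ∀ x y : X, dist x y ≤ ρ → k x ≤ k y → σ y ⊆ σ x := by
      intro x y hdxy hkxy
      have h1 : Dp y (2 * k x) = σ x := claimA x y hdxy
      have h2 : σ y ⊆ Dp y (2 * k x) := by
        rw [hσ]
        have h3 : Dp y (2 * k y - 1) = Dp y (2 * k y + 1) := hkeq y
        calc Dp y (2 * k y - 1) = Dp y (2 * k y + 1) := h3
          _ ⊆ Dp y (2 * k x) := hmono y (by omega)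
      rw [← h1]
      exact h2
    have key : ∀ x y : X, dist x y ≤ ρ → (σ x).ncard = (σ y).ncard → σ x = σ y := by
      intro x y hdxy hc
      rcases le_total (k x) (k y) with hk | hk
      · exact (Set.eq_of_subset_of_ncard_le (aux x y hdxy hk) hc.le (hfin x _)).symm
      · exact Set.eq_of_subset_of_ncard_le (aux y x (by rw [dist_comm]; exact hdxy) hk)
          hc.ge (hfin y _)
    refine ⟨M, fun i => {S | ∃ τ : Set (Set X), τ.ncard = (i : ℕ) + 1 ∧ S = {y | σ y = τ}}, ?_, ?_, ?_⟩
    · -- r-disjoint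
      rintro i S₁ ⟨τ₁, hτ₁, rfl⟩ S₂ ⟨τ₂, hτ₂, rfl⟩ hne12 x hx y hy
      by_contra hle
      push_neg at hle
      have hdxy : dist x y ≤ ρ := le_trans hle (le_max_left r 0)
      have hcxy : (σ x).ncard = (σ y).ncard := by
        rw [Set.mem_setOf_eq] at hx hy
        rw [hx, hy, hτ₁, hτ₂]
      have := key x y hdxy hcxy
      rw [Set.mem_setOf_eq] at hx hy
      exact hne12 (by rw [← hx, ← hy, this])
    · -- bounded
      rintro i S ⟨τ, hτ, rfl⟩
      by_cases hSne : {y | σ y = τ}.Nonempty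
      · have hτne : τ.Nonempty := Set.nonempty_of_ncard_ne_zero (by omega)
        obtain ⟨U, hUτ⟩ := hτne
        obtain ⟨y₀, hy₀⟩ := hSne
        rw [Set.mem_setOf_eq] at hy₀
        have hU𝒰 : U ∈ 𝒰 := by
          have : U ∈ σ y₀ := by rw [hy₀]; exact hUτ
          exact this.1
        have hSU : {y | σ y = τ} ⊆ U := by
          intro y hy
          rw [Set.mem_setOf_eq] at hy
          have : U ∈ σ y := by rw [hy]; exact hUτ
          exact this.2 (Metric.mem_closedBall_self (by positivity))
        calc EMetric.diam {y | σ y = τ} ≤ EMetric.diam U := EMetric.diam_mono hSU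
          _ ≤ ENNReal.ofReal M := hM U hU𝒰
      · rw [Set.not_nonempty_iff_eq_empty] at hSne
        rw [hSne]
        show Metric.ediam (∅ : Set X) ≤ _; simp
    · -- cover
      apply Set.eq_univ_of_forall
      intro x
      have hnex : (σ x).Nonempty := by
        have := hne x
        have hsub : Dp x (2 * n + 3) ⊆ σ x := hmono x (by have := hk2 x; omega)
        exact this.mono hsub
      have h1 : 1 ≤ (σ x).ncard := (Set.ncard_pos (hfin x _)).mpr hnex
      have h2 : (σ x).ncard ≤ n + 1 := hcard x _
      refine Set.mem_iUnion.mpr ⟨⟨(σ x).ncard - 1, by omega⟩, ?_⟩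
      refine Set.mem_sUnion.mpr ⟨{y | σ y = σ x}, ⟨σ x, ?_, rfl⟩, rfl⟩
      show (σ x).ncard = (σ x).ncard - 1 + 1
      omega
end

section
/- Let X and Y be metric spaces and let f: X → Y be a surjective Lipschitz map such that |f⁻¹(y)| ≤ n for each y ∈ Y and f has property (B). Then ANdim Y ≤ (ANdim X + 1)·n − 1. -/
open Metric Set
open scoped Classical

theorem aux_coloring {Y J : Type*} [MetricSpace Y] (Good : J → Prop) (V : J → Set Y)
    (p : ℕ) (ε : ℝ) (hε : 0 < ε) (j₀ : J)
    (H1f : ∀ y : Y, {j | Good j ∧ y ∈ V j}.Finite)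
    (H1c : ∀ y : Y, {j | Good j ∧ y ∈ V j}.ncard ≤ p)
    (H2 : ∀ y : Y, ∃ j, Good j ∧ ∀ z, dist z y ≤ (p : ℝ) * ε → z ∈ V j) :
    ∃ 𝒞 : Fin p → Set (Set Y),
      (∀ k, RDisjoint ε (𝒞 k)) ∧
      (∀ k, ∀ W ∈ 𝒞 k, ∃ j, Good j ∧ W ⊆ V j) ∧
      (⋃ k, ⋃₀ 𝒞 k) = Set.univ := by
  classical
  set N : ℕ → Y → Set J := fun a y => {j | Good j ∧ ∀ z, dist z y ≤ (a : ℝ) * ε → z ∈ V j}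
    with hN
  have hNsub : ∀ a y, N a y ⊆ {j | Good j ∧ y ∈ V j} := by
    intro a y j hj
    exact ⟨hj.1, hj.2 y (by rw [dist_self]; positivity)⟩
  have hNfin : ∀ a y, (N a y).Finite := fun a y => (H1f y).subset (hNsub a y)
  have hNcard : ∀ a y, (N a y).ncard ≤ p := fun a y =>
    le_trans (Set.ncard_le_ncard (hNsub a y) (H1f y)) (H1c y)
  have hNmono : ∀ {a b : ℕ} (y : Y), a ≤ b → N b y ⊆ N a y := by
    intro a b y hab j hj
    refine ⟨hj.1, fun z hz => hj.2 z (hz.trans ?_)⟩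
    have h1 : (a : ℝ) ≤ b := Nat.cast_le.mpr hab
    nlinarith
  have hNlip : ∀ (a : ℕ) (y y' : Y), dist y y' ≤ ε → N (a + 1) y ⊆ N a y' := by
    intro a y y' hyy' j hj
    refine ⟨hj.1, fun z hz => hj.2 z ?_⟩
    have h1 : dist z y ≤ dist z y' + dist y' y := dist_triangle _ _ _
    have h2 : dist y' y = dist y y' := dist_comm _ _
    push_cast
    nlinarith
  have hNp : ∀ y, (N p y).Nonempty := by
    intro y
    obtain ⟨j, hg, hj⟩ := H2 y
    exact ⟨j, hg, fun z hz => hj z hz⟩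
  have hex : ∀ y, ∃ a, a < p ∧ N (a + 1) y = N a y := by
    intro y
    by_contra hcon
    push_neg at hcon
    have hstep : ∀ a, a < p → (N (a + 1) y).ncard < (N a y).ncard := fun a ha =>
      Set.ncard_lt_ncard (ssubset_of_subset_of_ne (hNmono y (Nat.le_succ a)) (hcon a ha))
        (hNfin a y)
    have hchain : ∀ a, a ≤ p → (N a y).ncard + a ≤ p := by
      intro a
      induction a with
      | zero => intro _; simpa using hNcard 0 y
      | succ b ih =>
        intro hb
        have h1 := ih (Nat.le_of_succ_le hb)
        have h2 := hstep b (Nat.lt_of_succ_le hb)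
        omega
    have h3 := hchain p le_rfl
    have h4 : 0 < (N p y).ncard := (Set.ncard_pos (hNfin p y)).mpr (hNp y)
    omega
  have hex' : ∀ y, ∃ a, N (a + 1) y = N a y := fun y =>
    ⟨(hex y).choose, (hex y).choose_spec.2⟩
  set lev : Y → ℕ := fun y => Nat.find (hex' y) with hlev
  have hlevspec : ∀ y, N (lev y + 1) y = N (lev y) y := fun y => Nat.find_spec (hex' y)
  have hlevle : ∀ y, lev y ≤ p :=
    fun y => le_of_lt (lt_of_le_of_lt (Nat.find_min' _ (hex y).choose_spec.2)
      (hex y).choose_spec.1)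
  have hSne : ∀ y, (N (lev y) y).Nonempty := fun y => (hNp y).mono (hNmono y (hlevle y))
  have hκ1 : ∀ y, 1 ≤ (N (lev y) y).ncard :=
    fun y => (Set.ncard_pos (hNfin _ y)).mpr (hSne y)
  have hκp : ∀ y, (N (lev y) y).ncard ≤ p := fun y => hNcard _ y
  set pick : Set J → J := fun T => if h : T.Nonempty then h.some else j₀ with hpick
  have hpickmem : ∀ T : Set J, T.Nonempty → pick T ∈ T := by
    intro T hT
    simp only [hpick]
    rw [dif_pos hT]
    exact hT.some_mem
  have hkey : ∀ y y', dist y y' ≤ ε → lev y ≤ lev y' → N (lev y') y' ⊆ N (lev y) y := by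
    intro y y' hd hl
    have h1 : N (lev y') y' ⊆ N (lev y + 1) y' := by
      rw [← hlevspec y']
      exact hNmono y' (Nat.succ_le_succ hl)
    have h2 : N (lev y + 1) y' ⊆ N (lev y) y :=
      hNlip (lev y) y' y (by rw [dist_comm]; exact hd)
    exact h1.trans h2
  have hmain : ∀ y y', dist y y' ≤ ε → (N (lev y) y).ncard = (N (lev y') y').ncard →
      N (lev y) y = N (lev y') y' := by
    intro y y' hd hk
    rcases le_total (lev y) (lev y') with hl | hl
    · exact (Set.eq_of_subset_of_ncard_le (hkey y y' hd hl) (le_of_eq hk) (hNfin _ y)).symm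
    · exact Set.eq_of_subset_of_ncard_le (hkey y' y (by rwa [dist_comm]) hl)
        (le_of_eq hk.symm) (hNfin _ y')
  refine ⟨fun k => (Set.range fun j : J =>
      {y : Y | (N (lev y) y).ncard = k.1 + 1 ∧ pick (N (lev y) y) = j}) \ {∅}, ?_, ?_, ?_⟩
  · rintro k Wa ⟨⟨j, rfl⟩, -⟩ Wb ⟨⟨j', rfl⟩, -⟩ hne y hy y' hy'
    by_contra hle
    push_neg at hle
    have heq := hmain y y' hle (by rw [hy.1, hy'.1])
    have hjj : j = j' := by rw [← hy.2, ← hy'.2, heq]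
    exact hne (by rw [hjj])
  · rintro k W ⟨⟨j, rfl⟩, hWne⟩
    have hne : {y : Y | (N (lev y) y).ncard = k.1 + 1 ∧ pick (N (lev y) y) = j}.Nonempty :=
      Set.nonempty_iff_ne_empty.mpr (by simpa using hWne)
    obtain ⟨y, hy⟩ := hne
    have hjS : j ∈ N (lev y) y := hy.2 ▸ hpickmem _ (hSne y)
    refine ⟨j, hjS.1, ?_⟩
    rintro y' hy'
    have hjS' : j ∈ N (lev y') y' := hy'.2 ▸ hpickmem _ (hSne y')
    exact (hNsub _ y' hjS').2
  · ext y
    simp only [Set.mem_iUnion, Set.mem_sUnion, Set.mem_univ, iff_true]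
    have h1 := hκ1 y
    have h2 := hκp y
    refine ⟨⟨(N (lev y) y).ncard - 1, by omega⟩,
      {y' : Y | (N (lev y') y').ncard = ((N (lev y) y).ncard - 1) + 1 ∧
        pick (N (lev y') y') = pick (N (lev y) y)}, ⟨⟨pick (N (lev y) y), rfl⟩, ?_⟩, ?_⟩
    · simp only [Set.mem_singleton_iff]
      intro hempty
      have : y ∈ ({} : Set Y) := hempty ▸ (⟨by omega, rfl⟩ :
        y ∈ {y' : Y | (N (lev y') y').ncard = ((N (lev y) y).ncard - 1) + 1 ∧
          pick (N (lev y') y') = pick (N (lev y) y)})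
      exact this
    · exact ⟨by omega, rfl⟩

/-- dimension-raising for the Assouad-Nagata dimension: if `f : X → Y`
is a surjective Lipschitz map with fibers of cardinality at most `n` satisfying
property (B), then `ANdim Y ≤ (ANdim X + 1) · n − 1`. -/
theorem statement3 {X Y : Type*} [MetricSpace X] [MetricSpace Y] (f : X → Y) (n : ℕ)
    (hsurj : Function.Surjective f) (hlip : LipschitzMap f)
    (hfib : ∀ y : Y, (f ⁻¹' {y}).encard ≤ (n : ℕ∞)) (hB : PropertyB0 f) :
    ∀ m : ℕ, ANdimLE X m → ANdimLE Y ((m + 1) * n - 1) := by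
  classical
  intro m hX
  obtain ⟨cf, hcf, hlipf⟩ := hlip
  obtain ⟨d, hd, hB0⟩ := hB
  obtain ⟨cX, hcX, hXcov⟩ := hX
  rcases Nat.eq_zero_or_pos n with hn | hn
  · -- n = 0 : Y is empty
    subst hn
    haveI : IsEmpty Y := ⟨fun y => by
      obtain ⟨x, hx⟩ := hsurj y
      have h1 := hfib y
      have h2 : x ∈ f ⁻¹' {y} := by simp [hx]
      have h3 : (f ⁻¹' {y}).encard = 0 := le_antisymm (by simpa using h1) (zero_le)
      rw [Set.encard_eq_zero] at h3
      exact (Set.notMem_empty x) (h3 ▸ h2)⟩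
    refine ⟨0, le_refl 0, fun r => ⟨fun _ => ∅, ?_, ?_, ?_⟩⟩
    · intro i U hU
      exact absurd hU (Set.notMem_empty U)
    · intro i U hU
      exact absurd hU (Set.notMem_empty U)
    · rw [Set.univ_eq_empty_iff.mpr ‹IsEmpty Y›]
      simp
  · -- n ≥ 1
    have hp1 : 1 ≤ (m + 1) * n := Nat.mul_pos (Nat.succ_pos m) hn
    set p := (m + 1) * n with hpdef
    have hpR : (0 : ℝ) < p := by exact_mod_cast hp1
    have hC0 : (0 : ℝ) ≤ cf * (cX + 1) * (8 * d * p) :=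
      mul_nonneg (mul_nonneg hcf.le (by linarith)) (by positivity)
    refine ⟨cf * (cX + 1) * (8 * d * (p : ℝ)), hC0, fun r => ?_⟩
    by_cases hr : 0 < r
    swap
    · -- r ≤ 0 : use singletons
      push_neg at hr
      refine ⟨fun _ => {S : Set Y | ∃ y, S = {y}}, ?_, ?_, ?_⟩
      · rintro i U hU W hW hUW x hx z hz
        obtain ⟨u, rfl⟩ := hU
        obtain ⟨w2, rfl⟩ := hW
        rw [Set.mem_singleton_iff] at hx hz
        have huw : u ≠ w2 := fun h => hUW (by rw [h])
        rw [hx, hz]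
        exact lt_of_le_of_lt hr (dist_pos.mpr huw)
      · rintro i U ⟨u, rfl⟩
        exact (EMetric.diam_singleton (x := u)).le.trans bot_le
      · ext y
        simp only [Set.mem_iUnion, Set.mem_sUnion, Set.mem_univ, iff_true]
        exact ⟨⟨0, Nat.succ_pos _⟩, {y}, ⟨y, rfl⟩, rfl⟩
    · -- main case r > 0
      set L := 4 * (p : ℝ) * r with hL
      have hL0 : 0 < L := by positivity
      set s := 2 * d * L with hs
      have hs0 : 0 < s := by positivity
      obtain ⟨𝒰X, hdisj, hmesh, hcovX⟩ := hXcov s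
      set V : Fin (m + 1) × Set X → Set Y :=
        fun j => f '' {x | ∃ u ∈ j.2, dist x u ≤ d * L} with hV
      set Good : Fin (m + 1) × Set X → Prop := fun j => j.2 ∈ 𝒰X j.1 with hGood
      have hCr : cf * (cX + 1) * (8 * d * (p : ℝ)) * r = cf * (d * L + cX * s + d * L) := by
        rw [hs, hL]; ring
      have hVdiam : ∀ j, Good j →
          EMetric.diam (V j) ≤ ENNReal.ofReal (cf * (cX + 1) * (8 * d * (p : ℝ)) * r) := by
        intro j hj
        apply EMetric.diam_le
        rintro y₁ ⟨x₁, ⟨u₁, hu₁, hxu₁⟩, rfl⟩ y₂ ⟨x₂, ⟨u₂, hu₂, hxu₂⟩, rfl⟩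
        rw [edist_dist]
        apply ENNReal.ofReal_le_ofReal
        have hu : dist u₁ u₂ ≤ cX * s := by
          have h1 : edist u₁ u₂ ≤ EMetric.diam j.2 := EMetric.edist_le_diam_of_mem hu₁ hu₂
          have h3 : edist u₁ u₂ ≤ ENNReal.ofReal (cX * s) := h1.trans (hmesh j.1 j.2 hj)
          rw [edist_dist] at h3
          exact (ENNReal.ofReal_le_ofReal_iff (mul_nonneg hcX hs0.le)).mp h3
        have hd12 : dist x₁ x₂ ≤ d * L + cX * s + d * L := by
          have h4 := dist_triangle4 x₁ u₁ u₂ x₂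
          have h5 : dist u₂ x₂ = dist x₂ u₂ := dist_comm _ _
          linarith
        rw [hCr]
        calc dist (f x₁) (f x₂) ≤ cf * dist x₁ x₂ := hlipf x₁ x₂
          _ ≤ cf * (d * L + cX * s + d * L) := by nlinarith
      have H2 : ∀ y : Y, ∃ j, Good j ∧ ∀ z, dist z y ≤ (p : ℝ) * r → z ∈ V j := by
        intro y
        have hball : EMetric.diam {z : Y | dist z y ≤ L / 2} ≤ ENNReal.ofReal L := by
          apply EMetric.diam_le
          intro z₁ hz₁ z₂ hz₂
          rw [edist_dist]
          apply ENNReal.ofReal_le_ofReal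
          simp only [Set.mem_setOf_eq] at hz₁ hz₂
          have h6 := dist_triangle z₁ y z₂
          have h7 : dist y z₂ = dist z₂ y := dist_comm _ _
          linarith
        obtain ⟨A, hAdiam, hAim⟩ := hB0 L hL0 _ hball
        have hyB : y ∈ f '' A := by
          rw [hAim]
          simp only [Set.mem_setOf_eq, dist_self]
          linarith
        obtain ⟨x₀, hx₀A, hx₀⟩ := hyB
        have hx₀U : x₀ ∈ ⋃ i, ⋃₀ 𝒰X i := by rw [hcovX]; trivial
        simp only [Set.mem_iUnion, Set.mem_sUnion] at hx₀U
        obtain ⟨i, U, hU, hx₀U⟩ := hx₀U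
        refine ⟨(i, U), hU, ?_⟩
        intro z hz
        have hzB : z ∈ f '' A := by
          rw [hAim]
          simp only [Set.mem_setOf_eq]
          have hpr : (p : ℝ) * r ≤ L / 2 := by rw [hL]; nlinarith
          linarith
        obtain ⟨x, hxA, hxz⟩ := hzB
        refine ⟨x, ⟨x₀, hx₀U, ?_⟩, hxz⟩
        have h8 : edist x x₀ ≤ ENNReal.ofReal (d * L) :=
          (EMetric.edist_le_diam_of_mem hxA hx₀A).trans hAdiam
        rw [edist_dist] at h8
        exact (ENNReal.ofReal_le_ofReal_iff (by positivity)).mp h8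
      have H1 : ∀ y : Y, {j | Good j ∧ y ∈ V j}.Finite ∧ {j | Good j ∧ y ∈ V j}.ncard ≤ p := by
        intro y
        obtain ⟨hFfin, hFcard⟩ := Set.encard_le_coe_iff_finite_ncard_le.mp (hfib y)
        haveI : Nonempty X := ⟨(hsurj y).choose⟩
        set w : Fin (m + 1) × Set X → X := fun j =>
          if h : ∃ x, (∃ u ∈ j.2, dist x u ≤ d * L) ∧ f x = y then h.choose
          else Classical.arbitrary X with hw
        have hwspec : ∀ j, Good j ∧ y ∈ V j →
            (∃ u ∈ j.2, dist (w j) u ≤ d * L) ∧ f (w j) = y := by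
          intro j hj
          obtain ⟨x, hxS, hxy⟩ := hj.2
          have hh : ∃ x, (∃ u ∈ j.2, dist x u ≤ d * L) ∧ f x = y := ⟨x, hxS, hxy⟩
          simp only [hw]
          rw [dif_pos hh]
          exact hh.choose_spec
        set φ : Fin (m + 1) × Set X → Fin (m + 1) × X := fun j => (j.1, w j) with hφ
        have hinj : Set.InjOn φ {j | Good j ∧ y ∈ V j} := by
          intro j hj j' hj' heq
          have h1 : j.1 = j'.1 := (Prod.ext_iff.mp heq).1
          have h2 : w j = w j' := (Prod.ext_iff.mp heq).2
          obtain ⟨⟨u, hu, hdu⟩, -⟩ := hwspec j hj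
          obtain ⟨⟨u', hu', hdu'⟩, -⟩ := hwspec j' hj'
          rw [← h2] at hdu'
          have hduu : dist u u' ≤ s := by
            rw [hs]
            have h9 := dist_triangle u (w j) u'
            have h10 : dist u (w j) = dist (w j) u := dist_comm _ _
            rw [hL] at *
            nlinarith
          have hUU : j.2 = j'.2 := by
            by_contra hne
            have h11 := hdisj j.1 j.2 hj.1 j'.2 (by rw [h1]; exact hj'.1) hne u hu u' hu'
            linarith
          exact Prod.ext_iff.mpr ⟨h1, hUU⟩
        have himg : φ '' {j | Good j ∧ y ∈ V j} ⊆
            (Set.univ : Set (Fin (m + 1))) ×ˢ (f ⁻¹' {y}) := by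
          rintro _ ⟨j, hj, rfl⟩
          refine ⟨Set.mem_univ _, ?_⟩
          simp only [Set.mem_preimage, Set.mem_singleton_iff]
          exact (hwspec j hj).2
        have hTfin : ((Set.univ : Set (Fin (m + 1))) ×ˢ (f ⁻¹' {y})).Finite :=
          Set.Finite.prod (Set.finite_univ) hFfin
        have hGfin : {j | Good j ∧ y ∈ V j}.Finite :=
          Set.Finite.of_finite_image (hTfin.subset himg) hinj
        refine ⟨hGfin, ?_⟩
        have h12 : {j | Good j ∧ y ∈ V j}.ncard = (φ '' {j | Good j ∧ y ∈ V j}).ncard :=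
          (Set.ncard_image_of_injOn hinj).symm
        have h13 := Set.ncard_le_ncard himg hTfin
        have h14 : ((Set.univ : Set (Fin (m + 1))) ×ˢ (f ⁻¹' {y})).ncard
            = (m + 1) * (f ⁻¹' {y}).ncard := by
          rw [← Nat.card_coe_set_eq, ← Nat.card_coe_set_eq,
            Nat.card_congr (Equiv.Set.prod _ _), Nat.card_prod,
            Nat.card_congr (Equiv.Set.univ (Fin (m + 1))), Nat.card_eq_fintype_card,
            Fintype.card_fin]
        rw [h12]
        calc (φ '' {j | Good j ∧ y ∈ V j}).ncard
            ≤ (m + 1) * (f ⁻¹' {y}).ncard := by rw [← h14]; exact h13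
          _ ≤ (m + 1) * n := Nat.mul_le_mul_left _ hFcard
      obtain ⟨𝒞, hC1, hC2, hC3⟩ := aux_coloring Good V p r hr
        (⟨0, Nat.succ_pos m⟩, (∅ : Set X)) (fun y => (H1 y).1) (fun y => (H1 y).2) H2
      have hpe : p - 1 + 1 = p := Nat.succ_pred_eq_of_pos hp1
      refine ⟨fun k => 𝒞 (Fin.cast hpe k), ?_, ?_, ?_⟩
      · intro k
        exact hC1 _
      · intro k W hW
        obtain ⟨j, hGj, hWV⟩ := hC2 _ W hW
        exact le_trans (EMetric.diam_mono hWV) (hVdiam j hGj)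
      · apply Set.eq_univ_of_univ_subset
        rw [← hC3]
        intro y hy
        simp only [Set.mem_iUnion, Set.mem_sUnion] at hy ⊢
        obtain ⟨k, W, hW, hyW⟩ := hy
        refine ⟨Fin.cast hpe.symm k, W, ?_, hyW⟩
        have hkk : Fin.cast hpe (Fin.cast hpe.symm k) = k := Fin.ext rfl
        rw [hkk]
        exact hW
end

section
/- Let f: X → Y be a map between metric spaces satisfying property (B)_n, let 𝒰 be a cover of X, let r < ∞, and let d < ∞ be the constant associated to r by property (B)_n (i.e., every subset B of Y with diam(B) ≤ r has f⁻¹(B) equal to a union of n sets of diameter ≤ d). Then the r-multiplicity of the cover f(𝒰) = {f(U) : U ∈ 𝒰} of Y is at most the d-multiplicity of 𝒰 times n. -/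
open Metric Set
open scoped Classical

lemma encard_finset_biUnion_le {α ι : Type*} (t : Finset ι) (s : ι → Set α) :
    (⋃ i ∈ t, s i).encard ≤ ∑ i ∈ t, (s i).encard := by
  classical
  induction t using Finset.induction_on with
  | empty => simp
  | insert a t hx ih =>
    rw [Finset.set_biUnion_insert, Finset.sum_insert hx]
    exact le_trans (Set.encard_union_le _ _) (add_le_add_right ih _)

/-- if `f` satisfies property (B)ₙ, `𝒰` is a cover of `X`, and `d` is the
constant associated to `r` by property (B)ₙ, then the `r`-multiplicity of `f(𝒰)` is at
most the `d`-multiplicity of `𝒰` times `n`. -/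
theorem statement7 {X Y : Type*} [MetricSpace X] [MetricSpace Y] (f : X → Y) (n : ℕ)
    (𝒰 : Set (Set X)) (hcov : IsCover 𝒰) (r d : ℝ) (hB : PropertyB f n)
    (hrd : ∀ B : Set Y, EMetric.diam B ≤ ENNReal.ofReal r →
      ∃ A : Fin n → Set X, f ⁻¹' B = ⋃ i, A i ∧
        ∀ i, EMetric.diam (A i) ≤ ENNReal.ofReal d) :
    rMult ((Set.image f) '' 𝒰) r ≤ rMult 𝒰 d * (n : ℕ∞) := by
  rw [rMult]
  refine iSup₂_le fun B hBr => ?_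
  obtain ⟨A, hA, hAd⟩ := hrd B hBr
  have hsub : {V | V ∈ (Set.image f) '' 𝒰 ∧ (V ∩ B).Nonempty} ⊆
      (Set.image f) '' (⋃ i, {U | U ∈ 𝒰 ∧ (U ∩ A i).Nonempty}) := by
    rintro V ⟨⟨U, hU, rfl⟩, y, ⟨x, hxU, rfl⟩, hyB⟩
    have hx : x ∈ f ⁻¹' B := hyB
    rw [hA] at hx
    obtain ⟨i, hxi⟩ := Set.mem_iUnion.mp hx
    exact ⟨U, Set.mem_iUnion.mpr ⟨i, hU, x, hxU, hxi⟩, rfl⟩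
  calc {V | V ∈ (Set.image f) '' 𝒰 ∧ (V ∩ B).Nonempty}.encard
      ≤ ((Set.image f) '' (⋃ i, {U | U ∈ 𝒰 ∧ (U ∩ A i).Nonempty})).encard :=
        Set.encard_le_encard hsub
    _ ≤ (⋃ i, {U | U ∈ 𝒰 ∧ (U ∩ A i).Nonempty}).encard := Set.encard_image_le _ _
    _ = (⋃ i ∈ (Finset.univ : Finset (Fin n)), {U | U ∈ 𝒰 ∧ (U ∩ A i).Nonempty}).encard := by
        simp
    _ ≤ ∑ i : Fin n, {U | U ∈ 𝒰 ∧ (U ∩ A i).Nonempty}.encard :=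
        encard_finset_biUnion_le _ _
    _ ≤ ∑ _i : Fin n, rMult 𝒰 d := by
        refine Finset.sum_le_sum fun i _ => ?_
        exact le_iSup₂ (f := fun (B : Set X) (_ : EMetric.diam B ≤ ENNReal.ofReal d) =>
          {U | U ∈ 𝒰 ∧ (U ∩ B).Nonempty}.encard) (A i) (hAd i)
    _ = rMult 𝒰 d * (n : ℕ∞) := by
        simp [Finset.sum_const, nsmul_eq_mul, mul_comm]
end

section
/- Suppose a metric space X admits a 1-precode structure for asymptotic dimension, i.e., a sequence 𝒰₀, 𝒰₁, … of uniformly bounded covers of X such that (a) for every i and every U ∈ 𝒰ᵢ there exists exactly one V ∈ 𝒰ᵢ₊₁ with U ⊆ V, (b) every bounded subset of X is contained in some member of some 𝒰ᵢ, and (c) for every r < ∞ there exists i with r-multiplicity of 𝒰ᵢ at most 1. Then there exist an ultrametric space Z and a coarse equivalence f: Z → X. -/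
open Metric Set
open scoped Classical

lemma multOne_pair {X : Type*} [MetricSpace X] {𝒱 : Set (Set X)} {s : ℝ}
    (hmult : MultLE 𝒱 s 1) {U W : Set X} (hU : U ∈ 𝒱) (hW : W ∈ 𝒱)
    {B : Set X} (hdB : EMetric.diam B ≤ ENNReal.ofReal s)
    (hUB : (U ∩ B).Nonempty) (hWB : (W ∩ B).Nonempty) : U = W := by
  by_contra hUW
  have hsub : {U, W} ⊆ {U' | U' ∈ 𝒱 ∧ (U' ∩ B).Nonempty} := by
    rintro V (rfl | rfl)
    · exact ⟨hU, hUB⟩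
    · exact ⟨hW, hWB⟩
  have h2 : (2 : ℕ∞) ≤ {U' | U' ∈ 𝒱 ∧ (U' ∩ B).Nonempty}.encard := by
    rw [← Set.encard_pair hUW]
    exact Set.encard_mono hsub
  have h1 := hmult B hdB
  have : (2 : ℕ∞) ≤ 1 := le_trans h2 (by exact_mod_cast h1)
  norm_num at this

lemma multOne_lebesgue {X : Type*} [MetricSpace X] {𝒱 : Set (Set X)} {s : ℝ}
    (hcov : IsCover 𝒱) (hmult : MultLE 𝒱 s 1) {B : Set X} (hB : B.Nonempty)
    (hdB : EMetric.diam B ≤ ENNReal.ofReal s) : ∃ U ∈ 𝒱, B ⊆ U := by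
  obtain ⟨x, hx⟩ := hB
  have hx' : x ∈ ⋃₀ 𝒱 := by rw [hcov]; trivial
  obtain ⟨U, hU, hxU⟩ := hx'
  refine ⟨U, hU, fun y hy => ?_⟩
  have hy' : y ∈ ⋃₀ 𝒱 := by rw [hcov]; trivial
  obtain ⟨W, hW, hyW⟩ := hy'
  have := multOne_pair hmult hU hW hdB ⟨x, hxU, hx⟩ ⟨y, hyW, hy⟩
  exact this ▸ hyW

lemma multOne_disj {X : Type*} [MetricSpace X] {𝒱 : Set (Set X)} {s : ℝ}
    (hmult : MultLE 𝒱 s 1) {U W : Set X} (hU : U ∈ 𝒱) (hW : W ∈ 𝒱) {x : X}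
    (hxU : x ∈ U) (hxW : x ∈ W) : U = W :=
  multOne_pair hmult hU hW (B := {x}) (by show Metric.ediam ({x} : Set X) ≤ _; simp) ⟨x, hxU, rfl⟩ ⟨x, hxW, rfl⟩

noncomputable def ultraMetricOf {X : Type*} (ρ : X → X → ℕ)
    (hsymm : ∀ x y, ρ x y = ρ y x)
    (hmax : ∀ x y z, ρ x z ≤ max (ρ x y) (ρ y z)) : MetricSpace X where
  dist x y := if x = y then 0 else (ρ x y : ℝ) + 1
  dist_self x := if_pos rfl
  dist_comm x y := by
    show (if x = y then (0:ℝ) else (ρ x y : ℝ) + 1) = (if y = x then (0:ℝ) else (ρ y x : ℝ) + 1)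
    by_cases h : x = y
    · simp [h]
    · rw [if_neg h, if_neg (Ne.symm h), hsymm]
  dist_triangle x y z := by
    try dsimp only
    split_ifs with h1 h2 h3 h3 h2 h3 h3
    · norm_num
    · positivity
    · positivity
    · positivity
    · exact absurd (h2.trans h3) h1
    · subst h2; have : (0:ℝ) ≤ (ρ x z : ℝ) := Nat.cast_nonneg _; linarith
    · subst h3; linarith
    · have h := hmax x y z
      have h' : (ρ x z : ℝ) ≤ max (ρ x y : ℝ) (ρ y z : ℝ) := by exact_mod_cast h
      rcases le_max_iff.mp h' with h'' | h'' <;>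
        nlinarith [Nat.cast_nonneg (α := ℝ) (ρ x y), Nat.cast_nonneg (α := ℝ) (ρ y z)]
  eq_of_dist_eq_zero := by
    intro x y h
    by_contra hxy
    have h' : (if x = y then (0:ℝ) else (ρ x y : ℝ) + 1) = 0 := h
    rw [if_neg hxy] at h'
    nlinarith [Nat.cast_nonneg (α := ℝ) (ρ x y)]

lemma ultraMetricOf_dist {X : Type*} (ρ : X → X → ℕ)
    (hsymm : ∀ x y, ρ x y = ρ y x)
    (hmax : ∀ x y z, ρ x z ≤ max (ρ x y) (ρ y z)) (x y : X) :
    @dist X (ultraMetricOf ρ hsymm hmax).toPseudoMetricSpace.toDist x y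
      = if x = y then 0 else (ρ x y : ℝ) + 1 := rfl

lemma ultraMetricOf_ultra {X : Type*} (ρ : X → X → ℕ)
    (hsymm : ∀ x y, ρ x y = ρ y x)
    (hmax : ∀ x y z, ρ x z ≤ max (ρ x y) (ρ y z)) :
    IsUltrametric (distOf (ultraMetricOf ρ hsymm hmax)) := by
  intro x y z
  show (if x = z then (0:ℝ) else (ρ x z : ℝ) + 1) ≤
    max (if x = y then (0:ℝ) else (ρ x y : ℝ) + 1) (if y = z then (0:ℝ) else (ρ y z : ℝ) + 1)
  split_ifs with h1 h2 h3 h3 h2 h3 h3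
  · simp
  · exact le_max_of_le_left le_rfl
  · exact le_max_of_le_right (by positivity)
  · exact le_max_of_le_left (by positivity)
  · exact absurd (h2.trans h3) h1
  · subst h2; exact le_max_of_le_right le_rfl
  · subst h3; exact le_max_of_le_left le_rfl
  · have h' : (ρ x z : ℝ) ≤ max (ρ x y : ℝ) (ρ y z : ℝ) := by exact_mod_cast hmax x y z
    rcases le_max_iff.mp h' with h'' | h''
    · exact le_max_of_le_left (by linarith)
    · exact le_max_of_le_right (by linarith)

/-- if `X` admits a `1`-precode structure for asymptotic dimension, then
there exist an ultrametric space `Z` and a coarse equivalence `f : Z → X`. -/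
theorem statement12 {X : Type u} [MetricSpace X] (𝒰 : ℕ → Set (Set X))
    (hcov : ∀ i, IsCover (𝒰 i)) (hub : ∀ i, UniformlyBounded (𝒰 i))
    (ha : ∀ i, ∀ U ∈ 𝒰 i, ∃! V, V ∈ 𝒰 (i + 1) ∧ U ⊆ V)
    (hb : ∀ D : Set X, Bornology.IsBounded D → ∃ i, ∃ U ∈ 𝒰 i, D ⊆ U)
    (hc : ∀ r : ℝ, ∃ i, MultLE (𝒰 i) r 1) :
    ∃ (Z : Type u) (mZ : MetricSpace Z),
      IsUltrametric (distOf mZ) ∧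
      ∃ f : Z → X, @CoarseEquivalence Z X mZ.toPseudoMetricSpace _ f := by
  classical
  choose lev hlev using hc
  choose mesh hmesh using hub
  obtain ⟨r, hr0, hrs⟩ : ∃ r : ℕ → ℝ, r 0 = 1 ∧
      ∀ k, r (k + 1) = max (r k) (mesh (lev (r k))) + 1 :=
    ⟨fun k => Nat.rec 1 (fun _ rk => max rk (mesh (lev rk)) + 1) k, rfl, fun _ => rfl⟩
  have hVcov : ∀ k : ℕ, IsCover (𝒰 (lev (r k))) := fun k => hcov _
  have hVmesh : ∀ k : ℕ, MeshLE (𝒰 (lev (r k))) (mesh (lev (r k))) := fun k => hmesh _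
  have hVmult : ∀ k : ℕ, MultLE (𝒰 (lev (r k))) (r k) 1 := fun k => hlev _
  have hrsucc : ∀ k, r k + 1 ≤ r (k + 1) := by
    intro k; rw [hrs k]; have := le_max_left (r k) (mesh (lev (r k))); linarith
  have hMler : ∀ k, mesh (lev (r k)) ≤ r (k + 1) := by
    intro k; rw [hrs k]; have := le_max_right (r k) (mesh (lev (r k))); linarith
  have hrmono : Monotone r := monotone_nat_of_le_succ (fun k => by linarith [hrsucc k])
  have hrk : ∀ k : ℕ, (k : ℝ) + 1 ≤ r k := by
    intro k; induction k with
    | zero => simp [hr0]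
    | succ n ih => push_cast; linarith [hrsucc n]
  have hrpos : ∀ k, 0 < r k := fun k => lt_of_lt_of_le (by positivity) (hrk k)
  have hSle : ∀ (x y : X) (k : ℕ), dist x y ≤ r k →
      ∃ U ∈ 𝒰 (lev (r k)), x ∈ U ∧ y ∈ U := by
    intro x y k h
    have hd : EMetric.diam ({x, y} : Set X) ≤ ENNReal.ofReal (r k) := by
      show Metric.ediam ({x, y} : Set X) ≤ _
      rw [EMetric.diam_pair, edist_dist]
      exact ENNReal.ofReal_le_ofReal h
    obtain ⟨U, hU, hsub⟩ := multOne_lebesgue (hVcov k) (hVmult k) ⟨x, by simp⟩ hd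
    exact ⟨U, hU, hsub (by simp), hsub (by simp)⟩
  have hSne : ∀ x y : X, ∃ k : ℕ, ∃ U ∈ 𝒰 (lev (r k)), x ∈ U ∧ y ∈ U := by
    intro x y
    refine ⟨⌈dist x y⌉₊, hSle x y _ ?_⟩
    calc dist x y ≤ (⌈dist x y⌉₊ : ℝ) := Nat.le_ceil _
    _ ≤ (⌈dist x y⌉₊ : ℝ) + 1 := by linarith
    _ ≤ r _ := hrk _
  have hSmono : ∀ (x y : X) (k j : ℕ), (∃ U ∈ 𝒰 (lev (r k)), x ∈ U ∧ y ∈ U) → k ≤ j →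
      ∃ U ∈ 𝒰 (lev (r j)), x ∈ U ∧ y ∈ U := by
    intro x y k j hk hkj
    induction j, hkj using Nat.le_induction with
    | base => exact hk
    | succ n hn ih =>
      obtain ⟨U, hU, hxU, hyU⟩ := ih
      have hdU : EMetric.diam U ≤ ENNReal.ofReal (r (n + 1)) :=
        le_trans (hVmesh n U hU) (ENNReal.ofReal_le_ofReal (hMler n))
      obtain ⟨W, hW, hsub⟩ := multOne_lebesgue (hVcov (n + 1)) (hVmult (n + 1)) ⟨x, hxU⟩ hdU
      exact ⟨W, hW, hsub hxU, hsub hyU⟩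
  set ρ : X → X → ℕ := fun x y => sInf {k | ∃ U ∈ 𝒰 (lev (r k)), x ∈ U ∧ y ∈ U} with hρdef
  have hρmem : ∀ x y : X, ∃ U ∈ 𝒰 (lev (r (ρ x y))), x ∈ U ∧ y ∈ U := fun x y =>
    Nat.sInf_mem (s := {k | ∃ U ∈ 𝒰 (lev (r k)), x ∈ U ∧ y ∈ U}) (hSne x y)
  have hρle : ∀ (x y : X) (k : ℕ), dist x y ≤ r k → ρ x y ≤ k := fun x y k h =>
    Nat.sInf_le (hSle x y k h)
  have hρsymm : ∀ x y : X, ρ x y = ρ y x := by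
    intro x y
    have hset : {k | ∃ U ∈ 𝒰 (lev (r k)), x ∈ U ∧ y ∈ U}
        = {k | ∃ U ∈ 𝒰 (lev (r k)), y ∈ U ∧ x ∈ U} := by
      ext k; constructor <;> rintro ⟨U, hU, h1, h2⟩ <;> exact ⟨U, hU, h2, h1⟩
    simp only [hρdef, hset]
  have hρmax : ∀ x y z : X, ρ x z ≤ max (ρ x y) (ρ y z) := by
    intro x y z
    obtain ⟨U, hU, hxU, hyU⟩ :=
      hSmono x y _ (max (ρ x y) (ρ y z)) (hρmem x y) (le_max_left _ _)
    obtain ⟨W, hW, hyW, hzW⟩ :=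
      hSmono y z _ (max (ρ x y) (ρ y z)) (hρmem y z) (le_max_right _ _)
    have hUW := multOne_disj (hVmult (max (ρ x y) (ρ y z))) hU hW hyU hyW
    exact Nat.sInf_le ⟨U, hU, hxU, hUW ▸ hzW⟩
  have hdistle : ∀ x y : X, dist x y ≤ r (ρ x y + 1) := by
    intro x y
    obtain ⟨U, hU, hxU, hyU⟩ := hρmem x y
    have h1 : edist x y ≤ ENNReal.ofReal (r (ρ x y + 1)) :=
      le_trans (EMetric.edist_le_diam_of_mem hxU hyU)
        (le_trans (hVmesh _ U hU) (ENNReal.ofReal_le_ofReal (hMler _)))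
    rw [edist_dist] at h1
    exact (ENNReal.ofReal_le_ofReal_iff (le_of_lt (hrpos _))).mp h1
  have hρceil : ∀ x y : X, ρ x y ≤ ⌈dist x y⌉₊ := by
    intro x y
    refine hρle x y _ ?_
    calc dist x y ≤ (⌈dist x y⌉₊ : ℝ) := Nat.le_ceil _
    _ ≤ (⌈dist x y⌉₊ : ℝ) + 1 := by linarith
    _ ≤ r _ := hrk _
  refine ⟨X, ultraMetricOf ρ hρsymm hρmax, ultraMetricOf_ultra ρ hρsymm hρmax, id, ?_⟩
  have hdZ : ∀ x y : X,
      @dist X (ultraMetricOf ρ hρsymm hρmax).toPseudoMetricSpace.toDist x y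
        = if x = y then 0 else (ρ x y : ℝ) + 1 := ultraMetricOf_dist ρ hρsymm hρmax
  refine ⟨⟨⟨fun t => r (⌊t⌋₊ + 1), fun x x' => ?_⟩, fun B hB => ?_⟩,
    id, ⟨⟨fun t => (⌈t⌉₊ : ℝ) + 2, fun x x' => ?_⟩, fun B hB => ?_⟩,
    ⟨0, fun x => by simp⟩, ⟨0, fun x => by rw [Function.comp, id, id, hdZ]; simp⟩⟩
  · -- Bornologous id : Z → X
    simp only [id]
    rw [hdZ]
    by_cases h : x = x'
    · rw [if_pos h, h, dist_self]
      exact le_of_lt (hrpos _)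
    · rw [if_neg h]
      have hfl : ⌊(ρ x x' : ℝ) + 1⌋₊ = ρ x x' + 1 := by
        rw [show (ρ x x' : ℝ) + 1 = ((ρ x x' + 1 : ℕ) : ℝ) by push_cast; ring,
          Nat.floor_natCast]
      rw [hfl]
      exact le_trans (hdistle x x') (hrmono (by omega))

  · -- MetricProper id : Z → X
    obtain ⟨C, hC⟩ := Metric.isBounded_iff.mp hB
    rw [@Metric.isBounded_iff X (ultraMetricOf ρ hρsymm hρmax).toPseudoMetricSpace]
    refine ⟨(⌈C⌉₊ : ℝ) + 1, fun x hx y hy => ?_⟩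
    rw [hdZ]
    by_cases h : x = y
    · rw [if_pos h]; positivity
    · rw [if_neg h]
      have h1 : dist x y ≤ r ⌈C⌉₊ := by
        calc dist x y ≤ C := hC hx hy
        _ ≤ (⌈C⌉₊ : ℝ) := Nat.le_ceil _
        _ ≤ (⌈C⌉₊ : ℝ) + 1 := by linarith
        _ ≤ r _ := hrk _
      have := hρle x y _ h1
      have : (ρ x y : ℝ) ≤ (⌈C⌉₊ : ℝ) := by exact_mod_cast this
      linarith
  · -- Bornologous id : X → Z
    simp only [id]
    rw [hdZ]
    by_cases h : x = x'
    · rw [if_pos h]; positivity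
    · rw [if_neg h]
      have := hρceil x x'
      have : (ρ x x' : ℝ) ≤ (⌈dist x x'⌉₊ : ℝ) := by exact_mod_cast this
      linarith
  · -- MetricProper id : X → Z
    obtain ⟨C, hC⟩ :=
      (@Metric.isBounded_iff X (ultraMetricOf ρ hρsymm hρmax).toPseudoMetricSpace _).mp hB
    rw [Metric.isBounded_iff]
    refine ⟨r (⌈C⌉₊ + 1), fun x hx y hy => ?_⟩
    by_cases h : x = y
    · rw [h, dist_self]; exact le_of_lt (hrpos _)
    · have h1 := hC hx hy
      rw [hdZ, if_neg h] at h1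
      have h2 : ρ x y + 1 ≤ ⌈C⌉₊ := by
        have : ((ρ x y + 1 : ℕ) : ℝ) ≤ (⌈C⌉₊ : ℝ) := by
          push_cast
          linarith [Nat.le_ceil C]
        exact_mod_cast this
      exact le_trans (hdistle x y) (hrmono (by omega))
end

section
/- Let X be a metric space with asdim X ≤ n. Then X admits an (n+1)-precode structure for asymptotic dimension: there exists a sequence 𝒰₀, 𝒰₁, … of uniformly bounded covers of X such that (a) for every i and every U ∈ 𝒰ᵢ there exists exactly one V ∈ 𝒰ᵢ₊₁ with U ⊆ V, (b) every bounded subset of X is contained in some member of some 𝒰ᵢ, and (c) for every r < ∞ there exists i such that the r-multiplicity of 𝒰ᵢ is at most n+1. -/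
open Metric Set
open scoped Classical

/-! ### Auxiliary constructions for Statement 13 -/

/-- Each member of `𝒰` is nonempty and has a "private" point belonging to no other member. -/
def PrivCover {X : Type*} (𝒰 : Set (Set X)) : Prop :=
  ∀ U ∈ 𝒰, ∃ x ∈ U, ∀ U' ∈ 𝒰, x ∈ U' → U' = U

lemma exists_good_cover {X : Type*} [MetricSpace X] [Nonempty X] {n : ℕ} (h : AsdimLE X n)
    (s : ℝ) (hs : 0 ≤ s) :
    ∃ (𝒱 : Set (Set X)) (M : ℝ), 0 ≤ M ∧ IsCover 𝒱 ∧ MeshLE 𝒱 M ∧ LebesgueGE 𝒱 s ∧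
      MultLE 𝒱 s (n + 1) := by
  obtain ⟨D, 𝒰, hdisj, hdiam, hcover⟩ := h (3 * s + 1)
  set 𝒱 : Set (Set X) := {V | ∃ i : Fin (n + 1), ∃ U ∈ 𝒰 i, V = cthickening s U} with h𝒱
  have hmemx : ∀ x : X, ∃ i : Fin (n + 1), ∃ U ∈ 𝒰 i, x ∈ U := by
    intro x
    have hx : x ∈ ⋃ i, ⋃₀ 𝒰 i := hcover ▸ Set.mem_univ x
    simpa [Set.mem_iUnion, Set.mem_sUnion] using hx
  have hMD : (0:ℝ) ≤ max D 0 := le_max_right _ _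
  refine ⟨𝒱, max D 0 + 2 * s + 2, by linarith, ?_, ?_, ?_, ?_⟩
  · -- cover
    apply Set.eq_univ_of_forall
    intro x
    obtain ⟨i, U, hU, hxU⟩ := hmemx x
    exact ⟨cthickening s U, ⟨i, U, hU, rfl⟩, self_subset_cthickening U hxU⟩
  · -- mesh
    rintro V ⟨i, U, hU, rfl⟩
    apply EMetric.diam_le
    intro x hx y hy
    rw [mem_cthickening_iff] at hx hy
    have hx' : EMetric.infEdist x U < ENNReal.ofReal (s + 1) :=
      lt_of_le_of_lt hx (by rw [ENNReal.ofReal_lt_ofReal_iff (by linarith)]; linarith)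
    have hy' : EMetric.infEdist y U < ENNReal.ofReal (s + 1) :=
      lt_of_le_of_lt hy (by rw [ENNReal.ofReal_lt_ofReal_iff (by linarith)]; linarith)
    obtain ⟨u, hu, hxu⟩ := EMetric.infEdist_lt_iff.1 hx'
    obtain ⟨v, hv, hyv⟩ := EMetric.infEdist_lt_iff.1 hy'
    have huv : edist u v ≤ ENNReal.ofReal (max D 0) :=
      le_trans (EMetric.edist_le_diam_of_mem hu hv)
        (le_trans (hdiam i U hU) (ENNReal.ofReal_le_ofReal (le_max_left _ _)))
    calc edist x y ≤ edist x u + edist u v + edist v y := edist_triangle4 x u v y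
      _ ≤ ENNReal.ofReal (s + 1) + ENNReal.ofReal (max D 0) + ENNReal.ofReal (s + 1) := by
          have a1 : edist x u ≤ ENNReal.ofReal (s + 1) := hxu.le
          have a2 : edist v y ≤ ENNReal.ofReal (s + 1) := by rw [edist_comm]; exact hyv.le
          gcongr
      _ = ENNReal.ofReal (max D 0 + 2 * s + 2) := by
          rw [← ENNReal.ofReal_add (by linarith) (by linarith),
            ← ENNReal.ofReal_add (by linarith) (by linarith)]
          ring_nf
  · -- Lebesgue
    intro B hB
    rcases B.eq_empty_or_nonempty with hBe | ⟨x0, hx0⟩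
    · obtain ⟨i, U, hU, _⟩ := hmemx (Classical.arbitrary X)
      exact ⟨cthickening s U, ⟨i, U, hU, rfl⟩, by simp [hBe]⟩
    · obtain ⟨i, U, hU, hx0U⟩ := hmemx x0
      refine ⟨cthickening s U, ⟨i, U, hU, rfl⟩, fun y hy => ?_⟩
      rw [mem_cthickening_iff]
      exact le_trans (EMetric.infEdist_le_edist_of_mem hx0U)
        (le_trans (EMetric.edist_le_diam_of_mem hy hx0) hB)
  · -- multiplicity
    intro B hB
    set T : Fin (n + 1) → Set (Set X) :=
      fun i => {V | ∃ U ∈ 𝒰 i, V = cthickening s U ∧ (V ∩ B).Nonempty} with hT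
    have hsub : ∀ i, ∀ V1 ∈ T i, ∀ V2 ∈ T i, V1 = V2 := by
      rintro i V1 ⟨U1, hU1, rfl, x1, hx1V, hx1B⟩ V2 ⟨U2, hU2, rfl, x2, hx2V, hx2B⟩
      by_contra hne
      have hUne : U1 ≠ U2 := fun hUU => hne (by rw [hUU])
      rw [mem_cthickening_iff] at hx1V hx2V
      have h1 : EMetric.infEdist x1 U1 < ENNReal.ofReal (s + 1/4) :=
        lt_of_le_of_lt hx1V (by rw [ENNReal.ofReal_lt_ofReal_iff (by linarith)]; linarith)
      have h2 : EMetric.infEdist x2 U2 < ENNReal.ofReal (s + 1/4) :=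
        lt_of_le_of_lt hx2V (by rw [ENNReal.ofReal_lt_ofReal_iff (by linarith)]; linarith)
      obtain ⟨u1, hu1, hxu1⟩ := EMetric.infEdist_lt_iff.1 h1
      obtain ⟨u2, hu2, hxu2⟩ := EMetric.infEdist_lt_iff.1 h2
      have h12 : edist x1 x2 ≤ ENNReal.ofReal s := le_trans (EMetric.edist_le_diam_of_mem hx1B hx2B) hB
      have hd : edist u1 u2 ≤ ENNReal.ofReal (3 * s + 1/2) := by
        calc edist u1 u2 ≤ edist u1 x1 + edist x1 x2 + edist x2 u2 := edist_triangle4 _ _ _ _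
          _ ≤ ENNReal.ofReal (s + 1/4) + ENNReal.ofReal s + ENNReal.ofReal (s + 1/4) := by
              have a1 : edist u1 x1 ≤ ENNReal.ofReal (s + 1/4) := by
                rw [edist_comm]; exact hxu1.le
              have a2 : edist x2 u2 ≤ ENNReal.ofReal (s + 1/4) := hxu2.le
              gcongr
          _ = ENNReal.ofReal (3 * s + 1/2) := by
              rw [← ENNReal.ofReal_add (by linarith) hs,
                ← ENNReal.ofReal_add (by linarith) (by linarith)]
              ring_nf
      have hd' : dist u1 u2 ≤ 3 * s + 1/2 := by
        rw [edist_dist] at hd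
        exact (ENNReal.ofReal_le_ofReal_iff (by linarith)).1 hd
      have := hdisj i U1 hU1 U2 hU2 hUne u1 hu1 u2 hu2
      linarith
    classical
    set v : Fin (n + 1) → Set X := fun i => if hi : (T i).Nonempty then hi.choose else ∅ with hv
    have hS : {V | V ∈ 𝒱 ∧ (V ∩ B).Nonempty} ⊆ v '' Set.univ := by
      rintro V ⟨⟨i, U, hU, rfl⟩, hne⟩
      have hVT : cthickening s U ∈ T i := ⟨U, hU, rfl, hne⟩
      have hTne : (T i).Nonempty := ⟨_, hVT⟩
      have : v i = cthickening s U := by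
        rw [hv]; simp only [dif_pos hTne]
        exact hsub i _ hTne.choose_spec _ hVT
      exact ⟨i, Set.mem_univ i, this⟩
    calc {V | V ∈ 𝒱 ∧ (V ∩ B).Nonempty}.encard ≤ (v '' Set.univ).encard := Set.encard_mono hS
      _ ≤ (Set.univ : Set (Fin (n + 1))).encard := Set.encard_image_le _ _
      _ ≤ ((n + 1 : ℕ) : ℕ∞) := by
          rw [Set.encard_univ]
          simp

lemma step_lemma {X : Type*} [MetricSpace X] [Nonempty X] {n : ℕ} (h : AsdimLE X n) (x0 : X)
    (𝒰 : Set (Set X))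
    (hGood : IsCover 𝒰 ∧ PrivCover 𝒰 ∧ ∃ m, 0 ≤ m ∧ MeshLE 𝒰 m)
    (s R : ℝ) (hs : 0 ≤ s) (hR : 0 ≤ R) :
    ∃ 𝒲 : Set (Set X),
      (IsCover 𝒲 ∧ PrivCover 𝒲 ∧ ∃ M, 0 ≤ M ∧ MeshLE 𝒲 M) ∧
      (∀ U ∈ 𝒰, ∃! V, V ∈ 𝒲 ∧ U ⊆ V) ∧
      MultLE 𝒲 s (n + 1) ∧
      ∃ W ∈ 𝒲, Metric.closedBall x0 R ⊆ W := by
  obtain ⟨hcov, hpriv, m, hm0, hmesh⟩ := hGood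
  set s' := 2 * R + 4 * m + s + 1 with hs'
  obtain ⟨𝒱, M, hM0, hVcov, hVmesh, hVleb, hVmult⟩ := exists_good_cover h s' (by linarith)
  choose! τ hτmem hτpriv using hpriv
  -- auxiliary: diameter of closed balls
  have hdiamball : ∀ (c : X) (t : ℝ), 0 ≤ t →
      EMetric.diam (Metric.closedBall c t) ≤ ENNReal.ofReal (2 * t) := by
    intro c t ht
    apply EMetric.diam_le
    intro x hx y hy
    rw [Metric.mem_closedBall] at hx hy
    rw [edist_dist]
    exact ENNReal.ofReal_le_ofReal (by
      have := dist_triangle x c y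
      rw [dist_comm c y] at this
      linarith)
  obtain ⟨Vstar, hVstar𝒱, hVstarsub⟩ :=
    hVleb (Metric.closedBall x0 (R + 2 * m))
      (le_trans (hdiamball x0 (R + 2 * m) (by linarith))
        (ENNReal.ofReal_le_ofReal (by linarith)))
  have hgh : ∀ x : X, ∃ V ∈ 𝒱, Metric.closedBall x m ⊆ V := fun x =>
    hVleb (Metric.closedBall x m)
      (le_trans (hdiamball x m hm0) (ENNReal.ofReal_le_ofReal (by linarith)))
  choose gh hgh𝒱 hghsub using hgh
  classical
  set g : Set X → Set X :=
    fun U => if dist (τ U) x0 ≤ R + m then Vstar else gh (τ U) with hg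
  have hg𝒱 : ∀ U ∈ 𝒰, g U ∈ 𝒱 := by
    intro U _
    rw [hg]
    dsimp only
    split
    · exact hVstar𝒱
    · exact hgh𝒱 _
  have hUball : ∀ U ∈ 𝒰, U ⊆ Metric.closedBall (τ U) m := by
    intro U hU y hy
    rw [Metric.mem_closedBall]
    have : edist y (τ U) ≤ ENNReal.ofReal m :=
      le_trans (EMetric.edist_le_diam_of_mem hy (hτmem U hU)) (hmesh U hU)
    rw [edist_dist] at this
    exact (ENNReal.ofReal_le_ofReal_iff hm0).1 this
  have hgsub : ∀ U ∈ 𝒰, U ⊆ g U := by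
    intro U hU
    rw [hg]
    dsimp only
    split
    · rename_i hcase
      refine fun y hy => hVstarsub ?_
      have h1 : dist y (τ U) ≤ m := Metric.mem_closedBall.1 (hUball U hU hy)
      rw [Metric.mem_closedBall]
      have := dist_triangle y (τ U) x0
      linarith
    · exact fun y hy => hghsub (τ U) (hUball U hU hy)
  set F : Set X → Set X := fun V => ⋃₀ {U | U ∈ 𝒰 ∧ g U = V} with hF
  set 𝒲 : Set (Set X) := {W | ∃ U ∈ 𝒰, W = F (g U)} with h𝒲
  have hsubF : ∀ U ∈ 𝒰, U ⊆ F (g U) := fun U hU =>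
    Set.subset_sUnion_of_mem ⟨hU, rfl⟩
  have hFsub : ∀ V : Set X, F V ⊆ V := by
    rintro V x ⟨U, ⟨hU, hgU⟩, hxU⟩
    exact hgU ▸ hgsub U hU hxU
  have key : ∀ U ∈ 𝒰, ∀ V : Set X, τ U ∈ F V → g U = V := by
    rintro U hU V ⟨U', ⟨hU', hgU'⟩, hτU'⟩
    rw [hτpriv U hU U' hU' hτU'] at hgU'
    exact hgU'
  refine ⟨𝒲, ⟨?_, ?_, M, hM0, ?_⟩, ?_, ?_, ?_⟩
  · -- cover
    apply Set.eq_univ_of_forall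
    intro x
    have : x ∈ ⋃₀ 𝒰 := hcov ▸ Set.mem_univ x
    obtain ⟨U, hU, hxU⟩ := this
    exact ⟨F (g U), ⟨U, hU, rfl⟩, hsubF U hU hxU⟩
  · -- PrivCover
    rintro W ⟨U, hU, rfl⟩
    refine ⟨τ U, hsubF U hU (hτmem U hU), ?_⟩
    rintro W' ⟨U', hU', rfl⟩ hτW'
    rw [key U hU (g U') hτW']
  · -- mesh
    rintro W ⟨U, hU, rfl⟩
    exact le_trans (EMetric.diam_mono (hFsub (g U))) (hVmesh (g U) (hg𝒱 U hU))
  · -- unique parent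
    intro U hU
    refine ⟨F (g U), ⟨⟨U, hU, rfl⟩, hsubF U hU⟩, ?_⟩
    rintro W ⟨⟨U', hU', rfl⟩, hUW⟩
    rw [key U hU (g U') (hUW (hτmem U hU))]
  · -- multiplicity
    intro B hB
    have hBs' : EMetric.diam B ≤ ENNReal.ofReal s' :=
      le_trans hB (ENNReal.ofReal_le_ofReal (by linarith))
    have himg : {W | W ∈ 𝒲 ∧ (W ∩ B).Nonempty} ⊆
        F '' {V | V ∈ 𝒱 ∧ (V ∩ B).Nonempty} := by
      rintro W ⟨⟨U, hU, rfl⟩, x, hxW, hxB⟩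
      exact ⟨g U, ⟨hg𝒱 U hU, x, hFsub (g U) hxW, hxB⟩, rfl⟩
    calc {W | W ∈ 𝒲 ∧ (W ∩ B).Nonempty}.encard
        ≤ (F '' {V | V ∈ 𝒱 ∧ (V ∩ B).Nonempty}).encard := Set.encard_mono himg
      _ ≤ {V | V ∈ 𝒱 ∧ (V ∩ B).Nonempty}.encard := Set.encard_image_le _ _
      _ ≤ ((n + 1 : ℕ) : ℕ∞) := hVmult B hBs'
  · -- ball
    have hginball : ∀ x ∈ Metric.closedBall x0 R, ∀ U ∈ 𝒰, x ∈ U → g U = Vstar := by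
      intro x hx U hU hxU
      have h1 : dist (τ U) x ≤ m := by
        rw [dist_comm]
        exact Metric.mem_closedBall.1 (hUball U hU hxU)
      rw [Metric.mem_closedBall] at hx
      have hcase : dist (τ U) x0 ≤ R + m := by
        have := dist_triangle (τ U) x x0
        linarith
      rw [hg]
      dsimp only
      rw [if_pos hcase]
    have hx0self : x0 ∈ Metric.closedBall x0 R := Metric.mem_closedBall_self hR
    have hx0U : ∃ U ∈ 𝒰, x0 ∈ U := by
      have : x0 ∈ ⋃₀ 𝒰 := hcov ▸ Set.mem_univ x0
      exact this
    obtain ⟨U0, hU0, hx0U0⟩ := hx0U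
    have hgU0 : g U0 = Vstar := hginball x0 hx0self U0 hU0 hx0U0
    refine ⟨F Vstar, ⟨U0, hU0, by rw [hgU0]⟩, ?_⟩
    intro x hx
    have : x ∈ ⋃₀ 𝒰 := hcov ▸ Set.mem_univ x
    obtain ⟨U, hU, hxU⟩ := this
    have := hginball x hx U hU hxU
    rw [← this]
    exact hsubF U hU hxU
/-- if `asdim X ≤ n` then `X` admits an `(n+1)`-precode structure for
asymptotic dimension. -/
theorem statement13 {X : Type*} [MetricSpace X] (n : ℕ) (h : AsdimLE X n) :
    ∃ 𝒰 : ℕ → Set (Set X),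
      (∀ i, IsCover (𝒰 i)) ∧ (∀ i, UniformlyBounded (𝒰 i)) ∧
      (∀ i, ∀ U ∈ 𝒰 i, ∃! V, V ∈ 𝒰 (i + 1) ∧ U ⊆ V) ∧
      (∀ D : Set X, Bornology.IsBounded D → ∃ i, ∃ U ∈ 𝒰 i, D ⊆ U) ∧
      (∀ r : ℝ, ∃ i, MultLE (𝒰 i) r (n + 1)) := by
  rcases isEmpty_or_nonempty X with hX | hX
  · -- X is empty
    refine ⟨fun _ => {(∅ : Set X)}, ?_, ?_, ?_, ?_, ?_⟩
    · intro i
      have : (Set.univ : Set X) = ∅ := Set.univ_eq_empty_iff.2 hX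
      simp [_root_.IsCover, this]
    · intro i
      refine ⟨0, ?_⟩
      intro U hU
      rw [Set.mem_singleton_iff] at hU
      simp [hU, EMetric.diam]
    · intro i U hU
      rw [Set.mem_singleton_iff] at hU
      subst hU
      exact ⟨∅, ⟨rfl, subset_rfl⟩, fun V hV => hV.1⟩
    · intro D _
      refine ⟨0, ∅, rfl, ?_⟩
      have : D = ∅ := Set.eq_empty_of_isEmpty D
      simp [this]
    · intro r
      refine ⟨0, ?_⟩
      intro B _
      have : {U | U ∈ ({(∅ : Set X)} : Set (Set X)) ∧ (U ∩ B).Nonempty} = ∅ := by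
        ext U
        simp only [Set.mem_setOf_eq, Set.mem_singleton_iff, Set.mem_empty_iff_false, iff_false,
          not_and]
        rintro rfl
        simp
      rw [this]
      simp
  · -- X is nonempty
    haveI := hX
    obtain ⟨x0⟩ := hX
    have step : ∀ 𝒰 : Set (Set X),
        (IsCover 𝒰 ∧ PrivCover 𝒰 ∧ ∃ m, 0 ≤ m ∧ MeshLE 𝒰 m) → ∀ i : ℕ,
        ∃ 𝒲, (IsCover 𝒲 ∧ PrivCover 𝒲 ∧ ∃ M, 0 ≤ M ∧ MeshLE 𝒲 M) ∧
          (∀ U ∈ 𝒰, ∃! V, V ∈ 𝒲 ∧ U ⊆ V) ∧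
          MultLE 𝒲 i (n + 1) ∧
          ∃ W ∈ 𝒲, Metric.closedBall x0 i ⊆ W := by
      intro 𝒰 hG i
      exact step_lemma h x0 𝒰 hG (i : ℝ) (i : ℝ) (Nat.cast_nonneg i) (Nat.cast_nonneg i)
    choose! f hfG hfpar hfmult hfball using step
    -- the base cover: singletons
    set 𝒰₀ : Set (Set X) := {S | ∃ x : X, S = {x}} with h𝒰₀
    have hbase : IsCover 𝒰₀ ∧ PrivCover 𝒰₀ ∧ ∃ m, 0 ≤ m ∧ MeshLE 𝒰₀ m := by
      refine ⟨?_, ?_, 0, le_refl 0, ?_⟩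
      · apply Set.eq_univ_of_forall
        intro x
        exact ⟨{x}, ⟨x, rfl⟩, rfl⟩
      · rintro U ⟨x, rfl⟩
        refine ⟨x, rfl, ?_⟩
        rintro U' ⟨y, rfl⟩ hxy
        rw [Set.mem_singleton_iff] at hxy
        rw [hxy]
      · rintro U ⟨x, rfl⟩
        simp [EMetric.diam]
    set seq : ℕ → Set (Set X) := fun k => Nat.rec 𝒰₀ (fun i prev => f prev i) k with hseqdef
    have hseqsucc : ∀ i : ℕ, seq (i + 1) = f (seq i) i := fun i => rfl
    have hGseq : ∀ k, IsCover (seq k) ∧ PrivCover (seq k) ∧ ∃ m, 0 ≤ m ∧ MeshLE (seq k) m := by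
      intro k
      induction k with
      | zero => exact hbase
      | succ i ih => exact hfG (seq i) ih i
    refine ⟨seq, fun i => (hGseq i).1, ?_, ?_, ?_, ?_⟩
    · intro i
      obtain ⟨m, _, hm⟩ := (hGseq i).2.2
      exact ⟨m, hm⟩
    · intro i U hU
      have := hfpar (seq i) (hGseq i) i U hU
      rwa [← hseqsucc i] at this
    · intro D hD
      obtain ⟨R, hR⟩ := hD.subset_closedBall x0
      obtain ⟨i, hi⟩ := exists_nat_ge R
      obtain ⟨W, hW, hWb⟩ := hfball (seq i) (hGseq i) i
      rw [← hseqsucc i] at hW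
      exact ⟨i + 1, W, hW, fun x hx =>
        hWb (Metric.closedBall_subset_closedBall hi (hR hx))⟩
    · intro r
      obtain ⟨i, hi⟩ := exists_nat_ge r
      refine ⟨i + 1, ?_⟩
      intro B hB
      rw [hseqsucc i]
      exact hfmult (seq i) (hGseq i) i B (le_trans hB (ENNReal.ofReal_le_ofReal hi))
end

section
/- Let X be a metric space with ANasdim X ≤ n. Then X admits an (n+1)-precode structure for asymptotic Assouad-Nagata dimension: there exists a sequence 𝒰₀, 𝒰₁, … of uniformly bounded covers of X such that (a) for every i and every U ∈ 𝒰ᵢ there exists exactly one V ∈ 𝒰ᵢ₊₁ with U ⊆ V, (b) every bounded subset of X is contained in some member of some 𝒰ᵢ, (c) there exist a > 1 and i₀ ∈ ℕ with mesh(𝒰ᵢ) ≤ aⁱ for all i ≥ i₀, and (d) there exist c, r₀ > 0 such that for every r ≥ r₀ there exists i ∈ ℕ with aⁱ ≤ c·r and r-multiplicity of 𝒰ᵢ at most n+1. -/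
open Metric Set
open scoped Classical

/-! ### Auxiliary material for Statement 17 -/

section Stmt17Aux

variable {X : Type*} [MetricSpace X]

lemma dist_le_of_ediam_le' {S : Set X} {d : ℝ} (hd : 0 ≤ d)
    (h : EMetric.diam S ≤ ENNReal.ofReal d) {x y : X} (hx : x ∈ S) (hy : y ∈ S) :
    dist x y ≤ d :=
  (edist_le_ofReal hd).1 ((EMetric.edist_le_diam_of_mem hx hy).trans h)

lemma ediam_le_of_dist_le' {S : Set X} {d : ℝ} (hd : 0 ≤ d)
    (h : ∀ x ∈ S, ∀ y ∈ S, dist x y ≤ d) :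
    EMetric.diam S ≤ ENNReal.ofReal d :=
  EMetric.diam_le fun x hx y hy => (edist_le_ofReal hd).2 (h x hx y hy)

/-- A partition of `X` into nonempty pieces. -/
structure Partn (X : Type*) [MetricSpace X] where
  Q : Set (Set X)
  cover : ∀ x : X, ∃ V, V ∈ Q ∧ x ∈ V
  nonemp : ∀ V ∈ Q, V.Nonempty
  disj : ∀ V ∈ Q, ∀ W ∈ Q, V ≠ W → ∀ x ∈ V, x ∉ W

lemma Partn.isCover (P : Partn X) : IsCover P.Q := by
  apply Set.eq_univ_of_forall
  intro x
  obtain ⟨V, hV, hx⟩ := P.cover x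
  exact ⟨V, hV, hx⟩

lemma Partn.self_nest (P : Partn X) {U : Set X} (hU : U ∈ P.Q) :
    ∃! V, V ∈ P.Q ∧ U ⊆ V := by
  refine ⟨U, ⟨hU, subset_rfl⟩, ?_⟩
  rintro V ⟨hV, hUV⟩
  obtain ⟨x, hx⟩ := P.nonemp U hU
  by_contra hne
  exact P.disj V hV U hU hne x (hUV hx) hx

lemma MeshLE.mono {Q : Set (Set X)} {M M' : ℝ} (h : MeshLE Q M) (hMM' : M ≤ M') :
    MeshLE Q M' := fun U hU => (h U hU).trans (ENNReal.ofReal_le_ofReal hMM')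

/-- From an `(n+1)`-colored `s`-disjoint uniformly bounded cover one obtains a partition
with the same mesh bound whose `s`-multiplicity is at most `n+1`. -/
lemma exists_scale_partition {n : ℕ} {s d : ℝ} (hs : 0 ≤ s) (hd : 0 ≤ d)
    (𝒰 : Fin (n + 1) → Set (Set X))
    (hdisj : ∀ i, RDisjoint s (𝒰 i))
    (hdiam : ∀ i, ∀ U ∈ 𝒰 i, EMetric.diam U ≤ ENNReal.ofReal d)
    (hcov : (⋃ i, ⋃₀ 𝒰 i) = Set.univ) :
    ∃ P : Partn X, MeshLE P.Q d ∧ MultLE P.Q s (n + 1) := by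
  classical
  -- same-color members containing a common point coincide
  have huniq : ∀ (j : Fin (n + 1)) (U U' : Set X), U ∈ 𝒰 j → U' ∈ 𝒰 j →
      ∀ x, x ∈ U → x ∈ U' → U = U' := by
    intro j U U' hU hU' x hx hx'
    by_contra hne
    have := hdisj j U hU U' hU' hne x hx x hx'
    rw [dist_self] at this
    linarith
  have hex : ∀ x : X, {m : ℕ | ∃ j : Fin (n + 1), (j : ℕ) = m ∧ ∃ U ∈ 𝒰 j, x ∈ U}.Nonempty := by
    intro x
    have hx : x ∈ (⋃ i, ⋃₀ 𝒰 i) := hcov ▸ Set.mem_univ x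
    obtain ⟨_, ⟨j, rfl⟩, U, hU, hxU⟩ := hx
    exact ⟨(j : ℕ), j, rfl, U, hU, hxU⟩
  set k : X → ℕ := fun x => sInf {m : ℕ | ∃ j : Fin (n + 1), (j : ℕ) = m ∧ ∃ U ∈ 𝒰 j, x ∈ U}
    with hk_def
  have hkmem : ∀ x, ∃ j : Fin (n + 1), (j : ℕ) = k x ∧ ∃ U ∈ 𝒰 j, x ∈ U := fun x =>
    Nat.sInf_mem (hex x)
  set cl : X → Set X := fun x =>
    {y | k y = k x ∧ ∃ j : Fin (n + 1), (j : ℕ) = k x ∧ ∃ U ∈ 𝒰 j, x ∈ U ∧ y ∈ U}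
    with hcl_def
  have hmemcl : ∀ x, x ∈ cl x := by
    intro x
    obtain ⟨j, hj, U, hU, hx⟩ := hkmem x
    exact ⟨rfl, j, hj, U, hU, hx, hx⟩
  have hcl_eq : ∀ x y, y ∈ cl x → cl y = cl x := by
    rintro x y ⟨hky, j, hj, U, hU, hxU, hyU⟩
    ext z
    constructor
    · rintro ⟨hkz, j', hj', U', hU', hyU', hzU'⟩
      have hjj : j' = j := Fin.ext (by rw [hj', hky, ← hj])
      rw [hjj] at hU'
      have hUU : U' = U := huniq j U' U hU' hU y hyU' hyU
      rw [hUU] at hzU'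
      exact ⟨hkz.trans hky, j, hj, U, hU, hxU, hzU'⟩
    · rintro ⟨hkz, j', hj', U', hU', hxU', hzU'⟩
      have hjj : j' = j := Fin.ext (by rw [hj', ← hj])
      rw [hjj] at hU'
      have hUU : U' = U := huniq j U' U hU' hU x hxU' hxU
      rw [hUU] at hzU'
      exact ⟨hkz.trans hky.symm, j, hj.trans hky.symm, U, hU, hyU, hzU'⟩
  have hcl_diam : ∀ x, EMetric.diam (cl x) ≤ ENNReal.ofReal d := by
    intro x
    apply ediam_le_of_dist_le' hd
    rintro y ⟨hky, j, hj, U, hU, hxU, hyU⟩ y' ⟨hky', j', hj', U', hU', hxU', hyU'⟩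
    have hjj : j' = j := Fin.ext (by rw [hj', ← hj])
    rw [hjj] at hU'
    have hUU : U' = U := huniq j U' U hU' hU x hxU' hxU
    rw [hUU] at hyU'
    exact dist_le_of_ediam_le' hd (hdiam j U hU) hyU hyU'
  refine ⟨⟨Set.range cl, fun x => ⟨cl x, ⟨x, rfl⟩, hmemcl x⟩,
    ?_, ?_⟩, ?_, ?_⟩
  · rintro V ⟨x, rfl⟩
    exact ⟨x, hmemcl x⟩
  · rintro V ⟨x, rfl⟩ W ⟨y, rfl⟩ hne z hzx hzy
    exact hne ((hcl_eq x z hzx).symm.trans (hcl_eq y z hzy))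
  · rintro V ⟨x, rfl⟩
    exact hcl_diam x
  · -- multiplicity
    intro B hB
    set T : Set (Set X) := {U | U ∈ Set.range cl ∧ (U ∩ B).Nonempty} with hT_def
    set f : Set X → ℕ := fun V => sInf (k '' (V ∩ B)) with hf_def
    have hfspec : ∀ V ∈ T, ∃ p ∈ V ∩ B, k p = f V := by
      rintro V ⟨hV, hVB⟩
      have : (k '' (V ∩ B)).Nonempty := hVB.image k
      obtain ⟨p, hp, hkp⟩ := Nat.sInf_mem this
      exact ⟨p, hp, hkp⟩
    have hclV : ∀ V ∈ T, ∀ p ∈ V, cl p = V := by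
      rintro V ⟨⟨x, rfl⟩, -⟩ p hp
      exact hcl_eq x p hp
    have hinj : Set.InjOn f T := by
      intro V hV V' hV' hff
      by_contra hne
      obtain ⟨p, ⟨hpV, hpB⟩, hkp⟩ := hfspec V hV
      obtain ⟨p', ⟨hpV', hpB'⟩, hkp'⟩ := hfspec V' hV'
      have hkpp : k p = k p' := by rw [hkp, hkp', hff]
      obtain ⟨j, hj, U, hU, hpU⟩ := hkmem p
      obtain ⟨j', hj', U', hU', hpU'⟩ := hkmem p'
      have hjj : j' = j := Fin.ext (by rw [hj', ← hkpp, ← hj])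
      rw [hjj] at hU'
      by_cases hUU : U = U'
      · -- then p' ∈ cl p = V, contradicting disjointness
        have hp'cl : p' ∈ cl p := ⟨hkpp.symm, j, hj, U, hU, hpU, hUU ▸ hpU'⟩
        have h1 : cl p = V := hclV V hV p hpV
        have h2 : cl p' = V' := hclV V' hV' p' hpV'
        have h3 : cl p' = cl p := hcl_eq p p' hp'cl
        exact hne ((h1.symm.trans h3.symm).trans h2)
      · have := hdisj j U hU U' hU' hUU p hpU p' hpU'
        have hdpp : dist p p' ≤ s := dist_le_of_ediam_le' hs hB hpB hpB'
        linarith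
    have hmaps : Set.MapsTo f T {m : ℕ | m < n + 1} := by
      intro V hV
      obtain ⟨p, hp, hkp⟩ := hfspec V hV
      obtain ⟨j, hj, -⟩ := hkmem p
      have : f V = (j : ℕ) := by rw [hj, hkp]
      rw [Set.mem_setOf_eq, this]
      exact j.isLt
    calc T.encard ≤ {m : ℕ | m < n + 1}.encard :=
          Set.encard_le_encard_of_injOn hmaps hinj
      _ = ((n + 1 : ℕ) : ℕ∞) := by exact_mod_cast Set.Nat.encard_range (n + 1)

/-- A point of a nonempty set (with a fallback basepoint). -/
noncomputable def ptOf (x₀ : X) (U : Set X) : X :=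
  if h : U.Nonempty then h.choose else x₀

lemma ptOf_mem {U : Set X} (hU : U.Nonempty) (x₀ : X) : ptOf x₀ U ∈ U := by
  rw [ptOf, dif_pos hU]
  exact hU.choose_spec

/-- The partition class of `Q` containing `x`. -/
noncomputable def Partn.clOf (Q : Partn X) (x : X) : Set X := (Q.cover x).choose

lemma Partn.clOf_mem (Q : Partn X) (x : X) : Q.clOf x ∈ Q.Q := (Q.cover x).choose_spec.1

lemma Partn.mem_clOf (Q : Partn X) (x : X) : x ∈ Q.clOf x := (Q.cover x).choose_spec.2

/-- The class of `Q` to which a piece `U` of the previous partition is assigned. -/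
noncomputable def gfun (Q : Partn X) (x₀ : X) (R : ℝ) (U : Set X) : Set X :=
  if (U ∩ Metric.ball x₀ R).Nonempty then Q.clOf x₀ else Q.clOf (ptOf x₀ U)

lemma gfun_mem (Q : Partn X) (x₀ : X) (R : ℝ) (U : Set X) : gfun Q x₀ R U ∈ Q.Q := by
  rw [gfun]
  split <;> exact Q.clOf_mem _

/-- The merged class associated to `W ∈ Q`. -/
noncomputable def mergeCl (P Q : Partn X) (x₀ : X) (R : ℝ) (W : Set X) : Set X :=
  ⋃₀ {U | U ∈ P.Q ∧ gfun Q x₀ R U = W}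

lemma mem_mergeCl {P Q : Partn X} {x₀ : X} {R : ℝ} {W : Set X} {x : X} :
    x ∈ mergeCl P Q x₀ R W ↔ ∃ U, (U ∈ P.Q ∧ gfun Q x₀ R U = W) ∧ x ∈ U := by
  simp [mergeCl, Set.mem_sUnion]

/-- The coarsening of the partition `P` along `Q`. -/
noncomputable def mergePartn (P Q : Partn X) (x₀ : X) (R : ℝ) : Partn X where
  Q := mergeCl P Q x₀ R '' {W | ∃ U ∈ P.Q, gfun Q x₀ R U = W}
  cover := by
    intro x
    obtain ⟨U, hU, hx⟩ := P.cover x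
    exact ⟨mergeCl P Q x₀ R (gfun Q x₀ R U), ⟨gfun Q x₀ R U, ⟨U, hU, rfl⟩, rfl⟩,
      mem_mergeCl.2 ⟨U, ⟨hU, rfl⟩, hx⟩⟩
  nonemp := by
    rintro V ⟨W, ⟨U, hU, hUW⟩, rfl⟩
    obtain ⟨x, hx⟩ := P.nonemp U hU
    exact ⟨x, mem_mergeCl.2 ⟨U, ⟨hU, hUW⟩, hx⟩⟩
  disj := by
    rintro V ⟨W, ⟨U₀, hU₀, hW⟩, rfl⟩ V' ⟨W', ⟨U₀', hU₀', hW'⟩, rfl⟩ hne x hx hx'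
    obtain ⟨U, ⟨hU, hUW⟩, hxU⟩ := mem_mergeCl.1 hx
    obtain ⟨U', ⟨hU', hUW'⟩, hxU'⟩ := mem_mergeCl.1 hx'
    have hUU' : U = U' := by
      by_contra hc
      exact P.disj U hU U' hU' hc x hxU hxU'
    exact hne (by rw [← hUW, ← hUW', hUU'])

lemma mergePartn_nest (P Q : Partn X) (x₀ : X) (R : ℝ) {U : Set X} (hU : U ∈ P.Q) :
    ∃! V, V ∈ (mergePartn P Q x₀ R).Q ∧ U ⊆ V := by
  have hmem : mergeCl P Q x₀ R (gfun Q x₀ R U) ∈ (mergePartn P Q x₀ R).Q :=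
    ⟨gfun Q x₀ R U, ⟨U, hU, rfl⟩, rfl⟩
  refine ⟨mergeCl P Q x₀ R (gfun Q x₀ R U),
    ⟨hmem, fun x hx => mem_mergeCl.2 ⟨U, ⟨hU, rfl⟩, hx⟩⟩, ?_⟩
  rintro V ⟨hV, hUV⟩
  obtain ⟨x, hx⟩ := P.nonemp U hU
  by_contra hne
  exact (mergePartn P Q x₀ R).disj V hV _ hmem hne x (hUV hx)
    (mem_mergeCl.2 ⟨U, ⟨hU, rfl⟩, hx⟩)

lemma mergePartn_ball (P Q : Partn X) (x₀ : X) {R : ℝ} (hR : 0 < R) :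
    ∃ V ∈ (mergePartn P Q x₀ R).Q, Metric.ball x₀ R ⊆ V := by
  obtain ⟨U₀, hU₀, hx₀⟩ := P.cover x₀
  have hg : gfun Q x₀ R U₀ = Q.clOf x₀ := if_pos ⟨x₀, hx₀, Metric.mem_ball_self hR⟩
  refine ⟨mergeCl P Q x₀ R (Q.clOf x₀), ⟨Q.clOf x₀, ⟨U₀, hU₀, hg⟩, rfl⟩, ?_⟩
  intro y hy
  obtain ⟨U, hU, hyU⟩ := P.cover y
  have hgU : gfun Q x₀ R U = Q.clOf x₀ := if_pos ⟨y, hyU, hy⟩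
  exact mem_mergeCl.2 ⟨U, ⟨hU, hgU⟩, hyU⟩

lemma mergeCl_close {P Q : Partn X} {x₀ : X} {R M : ℝ} (hM : 0 ≤ M) (hR : 0 ≤ R)
    (hmesh : MeshLE P.Q M) {W : Set X} {y : X}
    (hy : y ∈ mergeCl P Q x₀ R W) : ∃ w ∈ W, dist y w ≤ M + R := by
  obtain ⟨U, ⟨hU, hgU⟩, hyU⟩ := mem_mergeCl.1 hy
  rw [gfun] at hgU
  split_ifs at hgU with hball
  · obtain ⟨z, hzU, hzb⟩ := hball
    refine ⟨x₀, by rw [← hgU]; exact Q.mem_clOf x₀, ?_⟩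
    have h1 : dist y z ≤ M := dist_le_of_ediam_le' hM (hmesh U hU) hyU hzU
    have h2 : dist z x₀ ≤ R := le_of_lt (Metric.mem_ball.1 hzb)
    calc dist y x₀ ≤ dist y z + dist z x₀ := dist_triangle y z x₀
      _ ≤ M + R := by linarith
  · refine ⟨ptOf x₀ U, by rw [← hgU]; exact Q.mem_clOf _, ?_⟩
    have h1 : dist y (ptOf x₀ U) ≤ M :=
      dist_le_of_ediam_le' hM (hmesh U hU) hyU (ptOf_mem (P.nonemp U hU) x₀)
    linarith

lemma mergePartn_mesh {P Q : Partn X} {x₀ : X} {R M m : ℝ}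
    (hM : 0 ≤ M) (hR : 0 ≤ R) (hm : 0 ≤ m)
    (hmesh : MeshLE P.Q M) (hmeshQ : MeshLE Q.Q m) :
    MeshLE (mergePartn P Q x₀ R).Q (2 * M + 2 * R + m) := by
  rintro V ⟨W, ⟨U₀, hU₀, hW⟩, rfl⟩
  apply ediam_le_of_dist_le' (by linarith)
  intro y hy y' hy'
  obtain ⟨w, hw, hyw⟩ := mergeCl_close hM hR hmesh hy
  obtain ⟨w', hw', hyw'⟩ := mergeCl_close hM hR hmesh hy'
  have hWQ : W ∈ Q.Q := by rw [← hW]; exact gfun_mem Q x₀ R U₀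
  have hww : dist w w' ≤ m := dist_le_of_ediam_le' hm (hmeshQ W hWQ) hw hw'
  calc dist y y' ≤ dist y w + dist w y' := dist_triangle y w y'
    _ ≤ dist y w + (dist w w' + dist w' y') := by linarith [dist_triangle w w' y']
    _ ≤ 2 * M + 2 * R + m := by
        rw [dist_comm w' y'] at *
        linarith

lemma mergePartn_mult {n : ℕ} {P Q : Partn X} {x₀ : X} {R M s r : ℝ}
    (hM : 0 ≤ M) (hR : 0 ≤ R) (hr : 0 ≤ r)
    (hmesh : MeshLE P.Q M) (hmult : MultLE Q.Q s (n + 1))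
    (hrs : r + 2 * M + 2 * R ≤ s) :
    MultLE (mergePartn P Q x₀ R).Q r (n + 1) := by
  classical
  intro B hB
  set B' : Set X := {y | ∃ p ∈ B, dist y p ≤ M + R} with hB'_def
  have hB' : EMetric.diam B' ≤ ENNReal.ofReal s := by
    apply ediam_le_of_dist_le' (by linarith)
    rintro y ⟨p, hp, hyp⟩ y' ⟨p', hp', hyp'⟩
    have hpp : dist p p' ≤ r := dist_le_of_ediam_le' hr hB hp hp'
    calc dist y y' ≤ dist y p + dist p y' := dist_triangle y p y'
      _ ≤ dist y p + (dist p p' + dist p' y') := by linarith [dist_triangle p p' y']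
      _ ≤ s := by
          rw [dist_comm p' y'] at *
          linarith
  set S : Set (Set X) := {V | V ∈ (mergePartn P Q x₀ R).Q ∧ (V ∩ B).Nonempty} with hS_def
  set f : Set X → Set X := fun V =>
    if h : ∃ W, (∃ U ∈ P.Q, gfun Q x₀ R U = W) ∧ mergeCl P Q x₀ R W = V then h.choose else ∅
    with hf_def
  have hfspec : ∀ V ∈ S, (∃ U ∈ P.Q, gfun Q x₀ R U = f V) ∧ mergeCl P Q x₀ R (f V) = V := by
    rintro V ⟨⟨W, hWdom, hWV⟩, -⟩
    have hex : ∃ W, (∃ U ∈ P.Q, gfun Q x₀ R U = W) ∧ mergeCl P Q x₀ R W = V := ⟨W, hWdom, hWV⟩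
    rw [hf_def]
    simp only [dif_pos hex]
    exact hex.choose_spec
  have hinj : Set.InjOn f S := by
    intro V hV V' hV' hff
    rw [← (hfspec V hV).2, ← (hfspec V' hV').2, hff]
  have hmaps : Set.MapsTo f S {W | W ∈ Q.Q ∧ (W ∩ B').Nonempty} := by
    intro V hV
    obtain ⟨⟨U₁, hU₁, hgU₁⟩, hmerge⟩ := hfspec V hV
    obtain ⟨x, hxV, hxB⟩ := hV.2
    have hxm := mem_mergeCl.1 (hmerge ▸ hxV)
    obtain ⟨U, ⟨hU, hgU⟩, hxU⟩ := hxm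
    constructor
    · rw [← hgU₁]; exact gfun_mem Q x₀ R U₁
    · rw [gfun] at hgU
      split_ifs at hgU with hball
      · obtain ⟨z, hzU, hzb⟩ := hball
        refine ⟨x₀, by rw [← hgU]; exact Q.mem_clOf x₀, x, hxB, ?_⟩
        have h1 : dist x₀ z ≤ R := by
          rw [dist_comm]; exact le_of_lt (Metric.mem_ball.1 hzb)
        have h2 : dist z x ≤ M := dist_le_of_ediam_le' hM (hmesh U hU) hzU hxU
        calc dist x₀ x ≤ dist x₀ z + dist z x := dist_triangle x₀ z x
          _ ≤ M + R := by linarith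
      · refine ⟨ptOf x₀ U, by rw [← hgU]; exact Q.mem_clOf _, x, hxB, ?_⟩
        have h1 : dist (ptOf x₀ U) x ≤ M :=
          dist_le_of_ediam_le' hM (hmesh U hU) (ptOf_mem (P.nonemp U hU) x₀) hxU
        linarith
  calc S.encard ≤ {W | W ∈ Q.Q ∧ (W ∩ B').Nonempty}.encard :=
        Set.encard_le_encard_of_injOn hmaps hinj
    _ ≤ ((n + 1 : ℕ) : ℕ∞) := hmult B' hB'

end Stmt17Aux

/-- if `ANasdim X ≤ n` then `X` admits an `(n+1)`-precode structure for
asymptotic Assouad-Nagata dimension. -/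
theorem statement17 {X : Type*} [MetricSpace X] (n : ℕ) (h : ANasdimLE X n) :
    ∃ 𝒰 : ℕ → Set (Set X),
      (∀ i, IsCover (𝒰 i)) ∧ (∀ i, UniformlyBounded (𝒰 i)) ∧
      (∀ i, ∀ U ∈ 𝒰 i, ∃! V, V ∈ 𝒰 (i + 1) ∧ U ⊆ V) ∧
      (∀ D : Set X, Bornology.IsBounded D → ∃ i, ∃ U ∈ 𝒰 i, D ⊆ U) ∧
      ∃ (a : ℝ) (i₀ : ℕ), 1 < a ∧ (∀ i, i₀ ≤ i → MeshLE (𝒰 i) (a ^ i)) ∧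
        ∃ c r₀ : ℝ, 0 < c ∧ 0 < r₀ ∧ ∀ r : ℝ, r₀ ≤ r →
          ∃ i : ℕ, a ^ i ≤ c * r ∧ MultLE (𝒰 i) r (n + 1) := by
  classical
  rcases isEmpty_or_nonempty X with hE | hNE
  · -- trivial case: the empty space
    refine ⟨fun _ => {(∅ : Set X)}, ?_, ?_, ?_, ?_, 2, 0, one_lt_two, ?_, 1, 1,
      one_pos, one_pos, ?_⟩
    · intro i
      rw [_root_.IsCover, Set.sUnion_singleton, Set.univ_eq_empty_iff.2 hE]
    · intro i
      refine ⟨0, ?_⟩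
      rintro U rfl
      simp [EMetric.diam]
    · intro i U hU
      refine ⟨∅, ⟨rfl, ?_⟩, ?_⟩
      · rw [Set.mem_singleton_iff.1 hU]
      · rintro V ⟨hV, -⟩
        exact hV
    · intro D hD
      exact ⟨0, ∅, rfl, by rw [Set.eq_empty_of_isEmpty D]⟩
    · intro i hi U hU
      rw [Set.mem_singleton_iff.1 hU]
      simp [EMetric.diam]
    · intro r hr
      refine ⟨0, by simpa using hr, ?_⟩
      intro B hB
      have : {U | U ∈ ({(∅ : Set X)} : Set (Set X)) ∧ (U ∩ B).Nonempty} = ∅ := by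
        ext U
        simp only [Set.mem_setOf_eq, Set.mem_singleton_iff, Set.mem_empty_iff_false, iff_false,
          not_and]
        rintro rfl
        simp
      rw [this]
      simp
  · obtain ⟨x₀⟩ := hNE
    obtain ⟨c, b, hc, hb, hU⟩ := h
    set t : ℝ := 7 + 4 * (c + b) with ht_def
    set A : ℝ := 2 + 2 * (c + b) with hA_def
    have hcb : 0 ≤ c + b := by linarith
    have ht1 : 1 < t := by rw [ht_def]; linarith
    have ht0 : 0 < t := by linarith
    have htpow : ∀ i : ℕ, 1 ≤ t ^ i := fun i => one_le_pow₀ ht1.le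
    have htpow0 : ∀ i : ℕ, 0 < t ^ i := fun i => pow_pos ht0 i
    have hA0 : 0 ≤ A := by rw [hA_def]; linarith
    -- good partitions at every scale
    have hQ : ∀ i : ℕ, ∃ P : Partn X, MeshLE P.Q (c * t ^ i + b) ∧ MultLE P.Q (t ^ i) (n + 1) := by
      intro i
      obtain ⟨𝒱, h1, h2, h3⟩ := hU (t ^ i)
      have hs : (0 : ℝ) ≤ t ^ i := (htpow0 i).le
      have hd : 0 ≤ c * t ^ i + b := by positivity
      exact exists_scale_partition hs hd 𝒱 h1 h2 h3
    choose Qp hQmesh hQmult using hQ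
    -- the nested sequence of partitions
    set Pseq : ℕ → Partn X :=
      fun i => Nat.rec (Qp 0) (fun i Pi => mergePartn Pi (Qp (i + 1)) x₀ (t ^ i)) i
      with hPseq_def
    have hPsucc : ∀ i, Pseq (i + 1) = mergePartn (Pseq i) (Qp (i + 1)) x₀ (t ^ i) := fun i => rfl
    have hmeshP : ∀ i, MeshLE (Pseq i).Q (A * t ^ i) := by
      intro i
      induction i with
      | zero =>
          refine (hQmesh 0).mono ?_
          simp only [pow_zero, mul_one]
          rw [hA_def]
          linarith
      | succ i ih =>
          rw [hPsucc i]
          have hle := mergePartn_mesh (x₀ := x₀)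
            (mul_nonneg hA0 (htpow0 i).le) (htpow0 i).le
            (by positivity : (0:ℝ) ≤ c * t ^ (i + 1) + b) ih (hQmesh (i + 1))
          refine hle.mono ?_
          rw [pow_succ]
          set p := t ^ i with hp_def
          have hp1 : 1 ≤ p := htpow i
          have hp0 : 0 ≤ p := (htpow0 i).le
          rw [hA_def, ht_def]
          nlinarith [mul_nonneg (sub_nonneg.2 hp1) hb, mul_nonneg hp0 hc, mul_nonneg hp0 hb,
            mul_nonneg (mul_nonneg hp0 hc) hc, mul_nonneg (mul_nonneg hp0 hb) hb,
            mul_nonneg (mul_nonneg hp0 hb) hc]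
    have hmultP : ∀ (i : ℕ) (r : ℝ), 0 ≤ r → r ≤ t ^ i →
        MultLE (Pseq (i + 1)).Q r (n + 1) := by
      intro i r hr0 hri
      rw [hPsucc i]
      apply mergePartn_mult (M := A * t ^ i) (s := t ^ (i + 1))
        (mul_nonneg hA0 (htpow0 i).le) (htpow0 i).le hr0 (hmeshP i) (hQmult (i + 1))
      rw [pow_succ]
      set p := t ^ i with hp_def
      have hp0 : 0 ≤ p := (htpow0 i).le
      have hri' : r ≤ p := hri
      rw [hA_def, ht_def]
      nlinarith [mul_nonneg hp0 hc, mul_nonneg hp0 hb, hri']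
    have hballP : ∀ i : ℕ, ∃ V ∈ (Pseq (i + 1)).Q, Metric.ball x₀ (t ^ i) ⊆ V := by
      intro i
      rw [hPsucc i]
      exact mergePartn_ball (Pseq i) (Qp (i + 1)) x₀ (htpow0 i)
    -- the final sequence of covers
    refine ⟨fun j => (Pseq (j - 1)).Q, fun j => (Pseq (j - 1)).isCover,
      fun j => ⟨A * t ^ (j - 1), hmeshP (j - 1)⟩, ?_, ?_, t, 1, ht1, ?_, t ^ 3, t,
      pow_pos ht0 3, ht0, ?_⟩
    · -- nesting
      intro j U hUj
      match j with
      | 0 => exact (Pseq 0).self_nest hUj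
      | (k + 1) => exact mergePartn_nest (Pseq k) (Qp (k + 1)) x₀ (t ^ k) hUj
    · -- bounded sets
      intro D hD
      obtain ⟨ρ, hρ⟩ := hD.subset_closedBall x₀
      obtain ⟨i, hi⟩ := pow_unbounded_of_one_lt ρ ht1
      obtain ⟨V, hV, hball⟩ := hballP i
      refine ⟨i + 2, V, by simpa using hV, ?_⟩
      intro x hx
      apply hball
      rw [Metric.mem_ball]
      calc dist x x₀ ≤ ρ := Metric.mem_closedBall.1 (hρ hx)
        _ < t ^ i := hi
    · -- mesh bound
      intro j hj
      obtain ⟨k, rfl⟩ := Nat.exists_eq_add_of_le' hj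
      refine (hmeshP k).mono ?_
      rw [pow_succ]
      have hp0 : 0 ≤ t ^ k := (htpow0 k).le
      have hAt : A ≤ t := by rw [hA_def, ht_def]; linarith
      calc A * t ^ k = t ^ k * A := mul_comm _ _
        _ ≤ t ^ k * t := mul_le_mul_of_nonneg_left hAt hp0
    · -- multiplicity
      intro r hr
      have hr0 : 0 ≤ r := le_trans ht0.le hr
      have hex : ∃ i : ℕ, r ≤ t ^ i := by
        obtain ⟨i, hi⟩ := pow_unbounded_of_one_lt r ht1
        exact ⟨i, hi.le⟩
      set i := Nat.find hex with hi_def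
      have hi : r ≤ t ^ i := Nat.find_spec hex
      have hipos : i ≠ 0 := by
        intro h0
        rw [h0, pow_zero] at hi
        linarith
      obtain ⟨k, hk⟩ : ∃ k, i = k + 1 := ⟨i - 1, by omega⟩
      have hklt : t ^ k < r := by
        have := Nat.find_min hex (m := k) (by omega)
        push_neg at this
        exact this
      refine ⟨i + 2, ?_, ?_⟩
      · have h3 : t ^ (i + 2) = t ^ 3 * t ^ k := by
          rw [hk, ← pow_add]
          ring_nf
        rw [h3]
        have h4 : t ^ 3 * t ^ k ≤ t ^ 3 * r :=
          mul_le_mul_of_nonneg_left hklt.le (pow_pos ht0 3).le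
        exact h4
      · exact hmultP i r hr0 hi
end

section
/- For every metric space (X, d): ANasdim(X, d) ≤ 0 if and only if there exists an ultrametric ρ on X such that the identity map id: (X, d) → (X, ρ) is a quasi-isometric map. -/
open Metric Set
open scoped Classical

lemma backward_aux {X : Type*} [m : MetricSpace X] (ρ : X → X → ℝ)
    (hu : ∀ x y z : X, ρ x z ≤ max (ρ x y) (ρ y z))
    (hρcomm : ∀ x y, ρ x y = ρ y x) (hρself : ∀ x, ρ x x = 0)
    (c b : ℝ) (hc : 0 < c) (hb : 0 < b)
    (hpair : ∀ x x' : X, (1 / c) * dist x x' - b ≤ ρ x x' ∧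
      ρ x x' ≤ c * dist x x' + b) :
    ∃ c₀ b₀ : ℝ, 0 ≤ c₀ ∧ 0 ≤ b₀ ∧ ∀ r : ℝ, ∃ 𝒰 : Set (Set X),
      (∀ U ∈ 𝒰, ∀ V ∈ 𝒰, U ≠ V → ∀ x ∈ U, ∀ y ∈ V, r < dist x y) ∧
      (∀ U ∈ 𝒰, EMetric.diam U ≤ ENNReal.ofReal (c₀ * r + b₀)) ∧
      ⋃₀ 𝒰 = Set.univ := by
  refine ⟨c * c, 2 * c * b, by positivity, by positivity, fun r => ?_⟩
  rcases le_or_gt r 0 with hr | hr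
  · -- singletons
    refine ⟨{U | ∃ x : X, U = {x}}, ?_, ?_, ?_⟩
    · rintro U ⟨x, rfl⟩ V ⟨y, rfl⟩ hne a ha d hd
      simp only [mem_singleton_iff] at ha hd
      subst ha; subst hd
      have hxy : a ≠ d := fun h => hne (by rw [h])
      exact lt_of_le_of_lt hr (dist_pos.mpr hxy)
    · rintro U ⟨x, rfl⟩
      simp [EMetric.diam]
    · ext x; simp only [mem_sUnion, mem_univ, iff_true]
      exact ⟨{x}, ⟨x, rfl⟩, rfl⟩
  · have hs : ∃ s : ℝ, s = c * r + b := ⟨_, rfl⟩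
    obtain ⟨s, hs⟩ := hs
    refine ⟨{U | ∃ x : X, U = {y | ρ x y ≤ s}}, ?_, ?_, ?_⟩
    · rintro U ⟨x, rfl⟩ V ⟨x', rfl⟩ hne y hy z hz
      have hfar : s < ρ x x' := by
        by_contra hle
        push_neg at hle
        apply hne
        ext w
        simp only [mem_setOf_eq]
        constructor
        · intro hw
          calc ρ x' w ≤ max (ρ x' x) (ρ x w) := hu _ _ _
            _ ≤ s := max_le (by rw [← hρcomm]; exact hle) hw
        · intro hw
          calc ρ x w ≤ max (ρ x x') (ρ x' w) := hu _ _ _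
            _ ≤ s := max_le hle hw
      simp only [mem_setOf_eq] at hy hz
      have h1 : ρ x x' ≤ max (ρ x y) (max (ρ y z) (ρ z x')) := by
        calc ρ x x' ≤ max (ρ x y) (ρ y x') := hu _ _ _
          _ ≤ max (ρ x y) (max (ρ y z) (ρ z x')) :=
            max_le_max le_rfl (hu _ _ _)
      have hzx' : ρ z x' ≤ s := by rw [hρcomm]; exact hz
      have h2 : s < ρ y z := by
        rcases max_cases (ρ x y) (max (ρ y z) (ρ z x')) with ⟨he, _⟩ | ⟨he, _⟩
        · rw [he] at h1; linarith
        · rw [he] at h1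
          rcases max_cases (ρ y z) (ρ z x') with ⟨he2, _⟩ | ⟨he2, _⟩
          · rw [he2] at h1; linarith
          · rw [he2] at h1; linarith
      have h3 := (hpair y z).2
      rw [hs] at h2
      have : c * r + b < c * dist y z + b := lt_of_lt_of_le h2 h3
      nlinarith
    · rintro U ⟨x, rfl⟩
      apply EMetric.diam_le
      intro y hy z hz
      simp only [mem_setOf_eq] at hy hz
      rw [edist_le_ofReal (by positivity)]
      have hyz : ρ y z ≤ s := by
        calc ρ y z ≤ max (ρ y x) (ρ x z) := hu _ _ _
          _ ≤ s := max_le (by rw [← hρcomm]; exact hy) hz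
      have h4 := (hpair y z).1
      have hd : dist y z ≤ c * (s + b) := by
        have h5 : (1 / c) * dist y z ≤ s + b := by linarith
        have h6 : c * ((1 / c) * dist y z) ≤ c * (s + b) :=
          mul_le_mul_of_nonneg_left h5 hc.le
        have h7 : c * ((1 / c) * dist y z) = dist y z := by field_simp
        linarith
      rw [hs] at hd
      nlinarith
    · ext x; simp only [mem_sUnion, mem_univ, iff_true]
      refine ⟨_, ⟨x, rfl⟩, ?_⟩
      simp only [mem_setOf_eq, hρself x, hs]
      positivity


lemma forward_aux {X : Type*} [m : MetricSpace X]
    (c b : ℝ) (hc : 0 ≤ c) (hb : 0 ≤ b)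
    (hcov : ∀ r : ℝ, ∃ 𝒰 : Set (Set X),
      (∀ U ∈ 𝒰, ∀ V ∈ 𝒰, U ≠ V → ∀ x ∈ U, ∀ y ∈ V, r < dist x y) ∧
      (∀ U ∈ 𝒰, EMetric.diam U ≤ ENNReal.ofReal (c * r + b)) ∧
      ⋃₀ 𝒰 = Set.univ) :
    ∃ ρ : X → X → ℝ,
      (∀ x y z, ρ x z ≤ max (ρ x y) (ρ y z)) ∧
      (∀ x y, ρ x y = ρ y x) ∧ (∀ x, ρ x x = 0) ∧
      (∀ x y, ρ x y = 0 → x = y) ∧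
      (∀ x y, (1 / (c + 2)) * dist x y - (b + 1) ≤ ρ x y ∧
        ρ x y ≤ (c + 2) * dist x y + (b + 1)) := by
  -- the scales
  set rs : ℕ → ℝ := fun k => (b + 1) * (c + 2) ^ k with hrs
  have hrge : ∀ k, b + 1 ≤ rs k := by
    intro k
    have h1 : (1 : ℝ) ≤ (c + 2) ^ k := one_le_pow₀ (by linarith : (1:ℝ) ≤ c + 2)
    simp only [hrs]
    nlinarith
  have hrpos : ∀ k, 0 < rs k := fun k => lt_of_lt_of_le (by linarith) (hrge k)
  have hrmono : Monotone rs := by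
    intro i j hij
    simp only [hrs]
    have := pow_le_pow_right₀ (by linarith : (1:ℝ) ≤ c + 2) hij
    nlinarith
  have hrsucc : ∀ k, rs (k + 1) = (c + 2) * rs k := by
    intro k; simp only [hrs]; ring
  have hstep : ∀ k, c * rs k + b ≤ rs (k + 1) := by
    intro k
    rw [hrsucc k]
    have := hrge k
    nlinarith
  have hub : ∀ D : ℝ, ∃ k, D ≤ rs k := by
    intro D
    obtain ⟨n, hn⟩ := exists_nat_ge D
    refine ⟨n, hn.trans ?_⟩
    have h1 : (n : ℝ) ≤ 2 ^ n := by
      exact_mod_cast (Nat.lt_two_pow_self (n := n)).le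
    have h2 : (2 : ℝ) ^ n ≤ (c + 2) ^ n :=
      pow_le_pow_left₀ (by norm_num) (by linarith) n
    have h3 : (1 : ℝ) ≤ b + 1 := by linarith
    simp only [hrs]
    nlinarith [pow_pos (show (0:ℝ) < c + 2 by linarith) n]
  -- the covers
  choose P hdisj hdiam hcover using fun k => hcov (rs k)
  set E : ℕ → X → X → Prop := fun k x y => ∃ U, U ∈ P k ∧ x ∈ U ∧ y ∈ U with hE
  have hsameU : ∀ k U V, U ∈ P k → V ∈ P k → ∀ x, x ∈ U → x ∈ V → U = V := by
    intro k U V hU hV x hxU hxV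
    by_contra hne
    have := hdisj k U hU V hV hne x hxU x hxV
    rw [dist_self] at this
    exact absurd this (not_lt.mpr (hrpos k).le)
  have hEsymm : ∀ k x y, E k x y → E k y x := by
    rintro k x y ⟨U, hU, hx, hy⟩; exact ⟨U, hU, hy, hx⟩
  have hEtrans : ∀ k x y z, E k x y → E k y z → E k x z := by
    rintro k x y z ⟨U, hU, hx, hy⟩ ⟨V, hV, hy', hz⟩
    exact ⟨U, hU, hx, (hsameU k U V hU hV y hy hy') ▸ hz⟩
  have hclose : ∀ k x y, dist x y ≤ rs k → E k x y := by
    intro k x y hxy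
    have hx : x ∈ ⋃₀ P k := by rw [hcover k]; trivial
    have hy : y ∈ ⋃₀ P k := by rw [hcover k]; trivial
    obtain ⟨U, hU, hxU⟩ := hx
    obtain ⟨V, hV, hyV⟩ := hy
    by_cases hUV : U = V
    · exact ⟨U, hU, hxU, hUV ▸ hyV⟩
    · exact absurd (hdisj k U hU V hV hUV x hxU y hyV) (not_lt.mpr hxy)
  have hErefl : ∀ k x, E k x x := fun k x => hclose k x x (by rw [dist_self]; exact (hrpos k).le)
  have hEdist : ∀ k x y, E k x y → dist x y ≤ c * rs k + b := by
    rintro k x y ⟨U, hU, hx, hy⟩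
    have h1 : edist x y ≤ EMetric.diam U := EMetric.edist_le_diam_of_mem hx hy
    have h2 := h1.trans (hdiam k U hU)
    have hnn : 0 ≤ c * rs k + b := by nlinarith [hrpos k]
    exact (edist_le_ofReal hnn).mp h2
  have hEmono : ∀ j k, j ≤ k → ∀ x y, E j x y → E k x y := by
    intro j k hjk
    induction k, hjk using Nat.le_induction with
    | base => exact fun x y h => h
    | succ n hn ih =>
      intro x y h
      have h1 := hEdist n x y (ih x y h)
      exact hclose (n + 1) x y (h1.trans (hstep n))
  have hex : ∀ x y, {k | E k x y}.Nonempty := by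
    intro x y
    obtain ⟨k, hk⟩ := hub (dist x y)
    exact ⟨k, hclose k x y hk⟩
  -- the ultrametric
  set ρ : X → X → ℝ := fun x y => if x = y then 0 else rs (sInf {k | E k x y}) with hρdef
  have hρself : ∀ x, ρ x x = 0 := fun x => if_pos rfl
  have hρne : ∀ x y, x ≠ y → ρ x y = rs (sInf {k | E k x y}) := fun x y h => if_neg h
  have hρnonneg : ∀ x y, 0 ≤ ρ x y := by
    intro x y
    by_cases h : x = y
    · rw [h, hρself]
    · rw [hρne x y h]; exact (hrpos _).le
  have hρcomm : ∀ x y, ρ x y = ρ y x := by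
    intro x y
    by_cases h : x = y
    · rw [h]
    · rw [hρne x y h, hρne y x (Ne.symm h)]
      congr 1
      congr 1
      ext k
      exact ⟨hEsymm k x y, hEsymm k y x⟩
  have hρle : ∀ x y k, E k x y → ρ x y ≤ rs k := by
    intro x y k hk
    by_cases h : x = y
    · rw [h, hρself]; exact (hrpos k).le
    · rw [hρne x y h]
      exact hrmono (Nat.sInf_le hk)
  have hultra : ∀ x y z, ρ x z ≤ max (ρ x y) (ρ y z) := by
    intro x y z
    by_cases hxz : x = z
    · rw [hxz, hρself]
      exact le_max_of_le_left (hρnonneg z y)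
    by_cases hxy : x = y
    · rw [hxy]; exact le_max_right _ _
    by_cases hyz : y = z
    · rw [← hyz]; exact le_max_left _ _
    have h1 : E (sInf {k | E k x y}) x y := Nat.sInf_mem (hex x y)
    have h2 : E (sInf {k | E k y z}) y z := Nat.sInf_mem (hex y z)
    set K := max (sInf {k | E k x y}) (sInf {k | E k y z}) with hK
    have h3 : E K x y := hEmono _ K (le_max_left _ _) x y h1
    have h4 : E K y z := hEmono _ K (le_max_right _ _) y z h2
    have h5 : E K x z := hEtrans K x y z h3 h4
    have h6 : ρ x z ≤ rs K := hρle x z K h5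
    rw [hρne x y hxy, hρne y z hyz]
    calc ρ x z ≤ rs K := h6
      _ = max (rs (sInf {k | E k x y})) (rs (sInf {k | E k y z})) := hrmono.map_max
  have heq : ∀ x y, ρ x y = 0 → x = y := by
    intro x y h
    by_contra hne
    rw [hρne x y hne] at h
    exact absurd h (ne_of_gt (hrpos _))
  refine ⟨ρ, hultra, hρcomm, hρself, heq, fun x y => ?_⟩
  have hC : (0 : ℝ) < c + 2 := by linarith
  -- upper bound
  have hupper : ρ x y ≤ (c + 2) * dist x y + (b + 1) := by
    by_cases h : x = y
    · rw [h, hρself, dist_self]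
      nlinarith
    · have hfind : ∃ j, dist x y ≤ rs j := hub (dist x y)
      have hj : dist x y ≤ rs (Nat.find hfind) := Nat.find_spec hfind
      have hle : ρ x y ≤ rs (Nat.find hfind) :=
        hρle x y (Nat.find hfind) (hclose (Nat.find hfind) x y hj)
      rcases h0 : Nat.find hfind with _ | i
      · rw [h0] at hle
        have hr0 : rs 0 = b + 1 := by simp [hrs]
        rw [hr0] at hle
        nlinarith [dist_nonneg (x := x) (y := y)]
      · rw [h0, hrsucc i] at hle
        have hmin : ¬ dist x y ≤ rs i := Nat.find_min hfind (by omega)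
        push_neg at hmin
        nlinarith [dist_nonneg (x := x) (y := y)]
  -- lower bound
  have hclaim : dist x y ≤ (c + 2) * ρ x y + (b + 1) := by
    by_cases h : x = y
    · rw [h, dist_self]; nlinarith [hρnonneg y y]
    · have h1 : E (sInf {k | E k x y}) x y := Nat.sInf_mem (hex x y)
      have h2 := hEdist _ x y h1
      rw [hρne x y h]
      nlinarith [hrpos (sInf {k | E k x y})]
  constructor
  · have h5 : (1 / (c + 2)) * dist x y ≤ (1 / (c + 2)) * ((c + 2) * ρ x y + (b + 1)) :=
      mul_le_mul_of_nonneg_left hclaim (by positivity)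
    have h6 : (1 / (c + 2)) * ((c + 2) * ρ x y + (b + 1)) = ρ x y + (b + 1) / (c + 2) := by
      field_simp
    have h7 : (b + 1) / (c + 2) ≤ b + 1 := by
      rw [div_le_iff₀ hC]; nlinarith
    linarith
  · exact hupper

/-- `ANasdim (X, d) ≤ 0` iff there is an ultrametric `ρ` on `X` such that
`id : (X, d) → (X, ρ)` is a quasi-isometric map. -/
theorem statement19 {X : Type*} [m : MetricSpace X] :
    ANasdimLE X 0 ↔
      ∃ m' : MetricSpace X, IsUltrametric (distOf m') ∧
        @QuasiIsometric X X m.toPseudoMetricSpace m'.toPseudoMetricSpace id := by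
  constructor
  · rintro ⟨c, b, hc, hb, h⟩
    have hcov : ∀ r : ℝ, ∃ 𝒰 : Set (Set X),
        (∀ U ∈ 𝒰, ∀ V ∈ 𝒰, U ≠ V → ∀ x ∈ U, ∀ y ∈ V, r < dist x y) ∧
        (∀ U ∈ 𝒰, EMetric.diam U ≤ ENNReal.ofReal (c * r + b)) ∧
        ⋃₀ 𝒰 = Set.univ := by
      intro r
      obtain ⟨𝒰, h1, h2, h3⟩ := h r
      refine ⟨𝒰 0, h1 0, h2 0, ?_⟩
      rw [← h3]
      ext x
      simp only [Set.mem_iUnion]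
      refine ⟨fun hx => ⟨0, hx⟩, fun ⟨i, hi⟩ => ?_⟩
      have h0 : i = 0 := Fin.ext (Nat.lt_one_iff.mp i.isLt)
      rwa [h0] at hi
    obtain ⟨ρ, hultra, hcomm, hself, heq, hbound⟩ := forward_aux c b hc hb hcov
    have hnonneg : ∀ x y, 0 ≤ ρ x y := by
      intro x y
      have h1 := hultra x y x
      rw [hself x, ← hcomm x y] at h1
      simpa using h1
    have htri : ∀ x y z, ρ x z ≤ ρ x y + ρ y z := by
      intro x y z
      refine le_trans (hultra x y z) ?_
      have hxy := hnonneg x y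
      have hyz := hnonneg y z
      rcases max_cases (ρ x y) (ρ y z) with ⟨he, _⟩ | ⟨he, _⟩ <;> rw [he] <;> linarith
    refine ⟨{ dist := ρ,
              dist_self := hself,
              dist_comm := hcomm,
              dist_triangle := htri,
              eq_of_dist_eq_zero := fun h => heq _ _ h }, ?_, ?_⟩
    · exact hultra
    · refine ⟨⟨c + 2, b + 1, by linarith, by linarith, fun x x' => ?_⟩,
        1, one_pos, fun y => ⟨y, ?_⟩⟩
      · exact hbound x x'
      · show ρ y y ≤ 1
        rw [hself]
        norm_num
  · rintro ⟨m', hu, hqi⟩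
    obtain ⟨⟨c, b, hc, hb, hpair⟩, -⟩ := hqi
    obtain ⟨c₀, b₀, h0, h1, h2⟩ :=
      @backward_aux X m (distOf m') hu
        m'.toPseudoMetricSpace.dist_comm
        m'.toPseudoMetricSpace.dist_self
        c b hc hb (fun x x' => hpair x x')
    refine ⟨c₀, b₀, h0, h1, fun r => ?_⟩
    obtain ⟨𝒰, ha, hbd, hcv⟩ := h2 r
    refine ⟨fun _ => 𝒰, fun _ => ha, fun _ => hbd, ?_⟩
    show (⋃ _ : Fin 1, ⋃₀ 𝒰) = Set.univ
    rw [Set.iUnion_const]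
    exact hcv
end
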